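/- arXiv:2201.13004 — 3 statements merged into one kernel-verified Lean document; each statement's English description precedes it below -/
import Mathlib

section
/- Suppose 0 < n₁(s) < n(s) for every s ∈ 𝒮 with n(s) > 0. Then for every m : {0,1}×𝒮×ℝ^d → ℝ and every c : {0,1}×𝒮 → ℝ, G(m′) = G(m), where m′(a,s,x) := m(a,s,x) + c(a,s). Consequently, the doubly robust adjusted LATE estimator, which is a ratio of two such functionals (one built from the outcomes Y_i and one from the treatments), is numerically invariant to stratum-specific location shifts of the regression adjustments. -/
open Finset

/-- The doubly robust functional `G` built from inverse-`π̂` weights is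
numerically invariant to stratum-specific location shifts `c a s` of the regression
adjustment `m a s x` (where `a = true` codes arm `1` and `a = false` codes arm `0`).
Consequently the adjusted LATE estimator, a ratio of two such functionals (one built from
the outcomes `Y` and one from the treatments `D`), is invariant to such shifts. -/
theorem stmt1 {n : ℕ} {𝒮 : Type*} [Fintype 𝒮] [DecidableEq 𝒮] {d : ℕ}
    (A : Fin n → Bool) (S : Fin n → 𝒮) (X : Fin n → (Fin d → ℝ)) (Y D : Fin n → ℝ)
    (nTot n1 piHat : 𝒮 → ℝ)
    (hnTot : ∀ s, nTot s = ((univ.filter fun i => S i = s).card : ℝ))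
    (hn1 : ∀ s, n1 s = ((univ.filter fun i => A i = true ∧ S i = s).card : ℝ))
    (hpiHat : ∀ s, piHat s = n1 s / nTot s)
    (hpos : ∀ s, 0 < nTot s → 0 < n1 s ∧ n1 s < nTot s)
    (G : (Fin n → ℝ) → (Bool → 𝒮 → (Fin d → ℝ) → ℝ) → ℝ)
    (hG : ∀ (V : Fin n → ℝ) (m : Bool → 𝒮 → (Fin d → ℝ) → ℝ),
      G V m =
        ∑ i, ((if A i then (1 : ℝ) else 0) * (V i - m true (S i) (X i)) / piHat (S i)
          - (1 - if A i then (1 : ℝ) else 0) * (V i - m false (S i) (X i))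
              / (1 - piHat (S i))
          + m true (S i) (X i) - m false (S i) (X i))) :
    (∀ (V : Fin n → ℝ) (m : Bool → 𝒮 → (Fin d → ℝ) → ℝ) (c : Bool → 𝒮 → ℝ),
        G V (fun a s x => m a s x + c a s) = G V m) ∧
    (∀ (mY mD : Bool → 𝒮 → (Fin d → ℝ) → ℝ) (cY cD : Bool → 𝒮 → ℝ),
        (G D (fun a s x => mD a s x + cD a s))⁻¹ * G Y (fun a s x => mY a s x + cY a s)
          = (G D mD)⁻¹ * G Y mY) := by
  have h1 : ∀ (V : Fin n → ℝ) (m : Bool → 𝒮 → (Fin d → ℝ) → ℝ) (c : Bool → 𝒮 → ℝ),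
      G V (fun a s x => m a s x + c a s) = G V m := by
    intro V m c
    rw [hG, hG, ← sub_eq_zero, ← Finset.sum_sub_distrib]
    have key : ∀ i : Fin n,
        ((if A i then (1 : ℝ) else 0) * (V i - (m true (S i) (X i) + c true (S i))) / piHat (S i)
          - (1 - if A i then (1 : ℝ) else 0) * (V i - (m false (S i) (X i) + c false (S i)))
              / (1 - piHat (S i))
          + (m true (S i) (X i) + c true (S i)) - (m false (S i) (X i) + c false (S i)))
        - ((if A i then (1 : ℝ) else 0) * (V i - m true (S i) (X i)) / piHat (S i)
          - (1 - if A i then (1 : ℝ) else 0) * (V i - m false (S i) (X i))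
              / (1 - piHat (S i))
          + m true (S i) (X i) - m false (S i) (X i))
        = (if A i then (- c true (S i) / piHat (S i) + c true (S i) - c false (S i))
            else (c false (S i) / (1 - piHat (S i)) + c true (S i) - c false (S i))) := by
      intro i
      by_cases h : A i <;> simp [h] <;> ring
    calc (∑ i, _) = ∑ i : Fin n, (if A i then (- c true (S i) / piHat (S i) + c true (S i) - c false (S i))
            else (c false (S i) / (1 - piHat (S i)) + c true (S i) - c false (S i))) := by
          exact Finset.sum_congr rfl fun i _ => key i
      _ = ∑ s : 𝒮, ∑ i ∈ univ.filter (fun i => S i = s),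
            (if A i then (- c true (S i) / piHat (S i) + c true (S i) - c false (S i))
            else (c false (S i) / (1 - piHat (S i)) + c true (S i) - c false (S i))) :=
          (Finset.sum_fiberwise _ S _).symm
      _ = 0 := by
        apply Finset.sum_eq_zero
        intro s _
        have hsum : ∑ i ∈ univ.filter (fun i => S i = s),
            (if A i then (- c true (S i) / piHat (S i) + c true (S i) - c false (S i))
            else (c false (S i) / (1 - piHat (S i)) + c true (S i) - c false (S i)))
          = n1 s * (- c true s / piHat s + c true s - c false s)
            + (nTot s - n1 s) * (c false s / (1 - piHat s) + c true s - c false s) := by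
          have hstep : ∑ i ∈ univ.filter (fun i => S i = s),
              (if A i then (- c true (S i) / piHat (S i) + c true (S i) - c false (S i))
              else (c false (S i) / (1 - piHat (S i)) + c true (S i) - c false (S i)))
            = ∑ i ∈ univ.filter (fun i => S i = s),
              (if A i then (- c true s / piHat s + c true s - c false s)
              else (c false s / (1 - piHat s) + c true s - c false s)) :=
            Finset.sum_congr rfl fun i hi => by
              rw [(Finset.mem_filter.mp hi).2]
          rw [hstep]
          rw [Finset.sum_ite, Finset.sum_const, Finset.sum_const, Finset.filter_filter,
            Finset.filter_filter]
          have hc1 : ((univ.filter fun i => S i = s ∧ A i = true).card : ℝ) = n1 s := by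
            rw [hn1 s]; congr 2; ext i; simp only [Finset.mem_filter]; tauto
          have hc0 : ((univ.filter fun i => S i = s ∧ ¬A i = true).card : ℝ)
              = nTot s - n1 s := by
            have := Finset.card_filter_add_card_filter_not
              (s := univ.filter fun i : Fin n => S i = s) (p := fun i => A i = true)
            rw [Finset.filter_filter, Finset.filter_filter] at this
            have h2 : ((univ.filter fun i => S i = s ∧ A i = true).card : ℝ)
                + ((univ.filter fun i => S i = s ∧ ¬A i = true).card : ℝ) = nTot s := by
              rw [hnTot s, ← Nat.cast_add, this]
            linarith [hc1, h2]
          rw [nsmul_eq_mul, nsmul_eq_mul, hc1, hc0]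
        rw [hsum]
        rcases eq_or_lt_of_le (by rw [hnTot s]; positivity : (0:ℝ) ≤ nTot s) with h0 | h0
        · have hn1z : n1 s = 0 := by
            rw [hn1 s]
            have hemp : (univ.filter fun i => S i = s) = ∅ := by
              rw [hnTot s] at h0
              exact Finset.card_eq_zero.mp (by exact_mod_cast h0.symm)
            have hsub : (univ.filter fun i => A i = true ∧ S i = s) ⊆
                (univ.filter fun i => S i = s) := by
              intro i hi; simp only [Finset.mem_filter] at *; tauto
            rw [hemp] at hsub
            simp [Finset.subset_empty.mp hsub]
          rw [hn1z, ← h0]; ring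
        · obtain ⟨hp1, hp2⟩ := hpos s h0
          have hpi := hpiHat s
          have hne : nTot s ≠ 0 := ne_of_gt h0
          have hne1 : n1 s ≠ 0 := ne_of_gt hp1
          have hne2 : nTot s - n1 s ≠ 0 := sub_ne_zero.mpr (ne_of_gt hp2)
          have hpine : piHat s ≠ 0 := by rw [hpi]; exact div_ne_zero hne1 hne
          have hlt : piHat s < 1 := by rw [hpi]; exact (div_lt_one h0).mpr hp2
          have hpine2 : 1 - piHat s ≠ 0 := ne_of_gt (by linarith)
          rw [hpi] at *
          field_simp
          ring
  refine ⟨h1, ?_⟩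
  intro mY mD cY cD
  rw [h1, h1]
end

section
/- The set of global minimizers of (t,b) ↦ σ²_lin(t,b) over all coefficient collections (t_{a,s}, b_{a,s})_{a∈{0,1},s∈𝒮} ⊂ ℝ^k is exactly the set of (t*, b*) such that for every s ∈ 𝒮, √((1−π(s))/π(s))·(t*_{1,s} − τ·b*_{1,s}) + √(π(s)/(1−π(s)))·(t*_{0,s} − τ·b*_{0,s}) = √((1−π(s))/π(s))·(θ^L_{1,s} − τ·β^L_{1,s}) + √(π(s)/(1−π(s)))·(θ^L_{0,s} − τ·β^L_{0,s}). In particular (θ^L, β^L) is a minimizer. -/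
open MeasureTheory ProbabilityTheory Finset

noncomputable section

/-- Population data for a covariate-adaptive randomization (CAR) design:
potential outcomes `Y1, Y0`, potential treatment take-ups `D1, D0` (valued in `{0,1}`),
covariates `X`, stratum `S`, and target assignment probabilities `piS`. -/
structure CARPop (Ω : Type*) [MeasurableSpace Ω] (𝒮 : Type*) [MeasurableSpace 𝒮]
    (d : ℕ) where
  P : Measure Ω
  Y1 : Ω → ℝ
  Y0 : Ω → ℝ
  D1 : Ω → ℝ
  D0 : Ω → ℝ
  X : Ω → Fin d → ℝ
  S : Ω → 𝒮
  piS : 𝒮 → ℝ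

namespace CARPop

variable {Ω : Type*} [MeasurableSpace Ω] {𝒮 : Type*} [MeasurableSpace 𝒮] {d : ℕ}

/-- Potential treatment take-up `D(a)`, with `a : Bool` (`true` = assigned to treatment). -/
def Da (c : CARPop Ω 𝒮 d) (a : Bool) : Ω → ℝ := if a then c.D1 else c.D0

/-- `Y(D(a)) = Y(1)·D(a) + Y(0)·(1 − D(a))`. -/
def Ya (c : CARPop Ω 𝒮 d) (a : Bool) : Ω → ℝ :=
  fun ω => c.Y1 ω * c.Da a ω + c.Y0 ω * (1 - c.Da a ω)

/-- `W = Y(D(1))`. -/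
def W (c : CARPop Ω 𝒮 d) : Ω → ℝ := c.Ya true

/-- `Z = Y(D(0))`. -/
def Z (c : CARPop Ω 𝒮 d) : Ω → ℝ := c.Ya false

/-- The compliers event `{D(1) > D(0)}`. -/
def compliers (c : CARPop Ω 𝒮 d) : Set Ω := {ω | c.D0 ω < c.D1 ω}

/-- The LATE `τ = E[Y(1) − Y(0) | D(1) > D(0)]`. -/
def tau (c : CARPop Ω 𝒮 d) : ℝ :=
  (∫ ω in c.compliers, (c.Y1 ω - c.Y0 ω) ∂c.P) / (c.P c.compliers).toReal

/-- The stratum event `{S = s}`. -/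
def stratum (c : CARPop Ω 𝒮 d) (s : 𝒮) : Set Ω := {ω | c.S ω = s}

/-- Conditional expectation given `S = s`: `E[f | S = s]`. -/
def cEs (c : CARPop Ω 𝒮 d) (s : 𝒮) (f : Ω → ℝ) : ℝ :=
  (∫ ω in c.stratum s, f ω ∂c.P) / (c.P (c.stratum s)).toReal

/-- Conditional expectation given `S`, i.e. `E[f | S]` as the function `ω ↦ E[f | S = S ω]`. -/
def cES (c : CARPop Ω 𝒮 d) (f : Ω → ℝ) : Ω → ℝ := fun ω => c.cEs (c.S ω) f

/-- Centering at the conditional mean given `S`:  `f − E[f | S]`. -/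
def tilt (c : CARPop Ω 𝒮 d) (f : Ω → ℝ) : Ω → ℝ := fun ω => f ω - c.cES f ω

/-- A working model `m(a, s, x)` evaluated along `(S, X)`. -/
def wm (c : CARPop Ω 𝒮 d) (m : Bool → 𝒮 → (Fin d → ℝ) → ℝ) (a : Bool) : Ω → ℝ :=
  fun ω => m a (c.S ω) (c.X ω)

/-- Square-integrability bound for a working model: `E[(m(a,S,X))² | S = s] ≤ C < ∞`. -/
def WMBound (c : CARPop Ω 𝒮 d) (m : Bool → 𝒮 → (Fin d → ℝ) → ℝ) : Prop :=
  (∀ a : Bool, Measurable (fun ω => m a (c.S ω) (c.X ω))) ∧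
    ∃ C : ℝ, ∀ (a : Bool) (s : 𝒮), c.cEs s (fun ω => (m a (c.S ω) (c.X ω)) ^ 2) ≤ C

/-- Influence term `Ξ₁` of the adjusted LATE estimator with working models `mY, mD`. -/
def Xi1 (c : CARPop Ω 𝒮 d) (mY mD : Bool → 𝒮 → (Fin d → ℝ) → ℝ) : Ω → ℝ := fun ω =>
  ((1 - 1 / c.piS (c.S ω)) * c.tilt (c.wm mY true) ω - c.tilt (c.wm mY false) ω
      + c.tilt c.W ω / c.piS (c.S ω))
    - c.tau * ((1 - 1 / c.piS (c.S ω)) * c.tilt (c.wm mD true) ω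
        - c.tilt (c.wm mD false) ω + c.tilt (c.Da true) ω / c.piS (c.S ω))

/-- Influence term `Ξ₀` of the adjusted LATE estimator with working models `mY, mD`. -/
def Xi0 (c : CARPop Ω 𝒮 d) (mY mD : Bool → 𝒮 → (Fin d → ℝ) → ℝ) : Ω → ℝ := fun ω =>
  ((1 / (1 - c.piS (c.S ω)) - 1) * c.tilt (c.wm mY false) ω + c.tilt (c.wm mY true) ω
      - c.tilt c.Z ω / (1 - c.piS (c.S ω)))
    - c.tau * ((1 / (1 - c.piS (c.S ω)) - 1) * c.tilt (c.wm mD false) ω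
        + c.tilt (c.wm mD true) ω - c.tilt (c.Da false) ω / (1 - c.piS (c.S ω)))

/-- Influence term `Ξ₂` (between-strata variation). -/
def Xi2 (c : CARPop Ω 𝒮 d) : Ω → ℝ := fun ω =>
  (c.cES (fun ω' => c.W ω' - c.Z ω') ω - ∫ ω', (c.W ω' - c.Z ω') ∂c.P)
    - c.tau * (c.cES (fun ω' => c.Da true ω' - c.Da false ω') ω
        - ∫ ω', (c.Da true ω' - c.Da false ω') ∂c.P)

/-- `σ₁² = E[π(S)·Ξ₁²]`. -/
def sigma1Sq (c : CARPop Ω 𝒮 d) (mY mD : Bool → 𝒮 → (Fin d → ℝ) → ℝ) : ℝ :=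
  ∫ ω, c.piS (c.S ω) * (c.Xi1 mY mD ω) ^ 2 ∂c.P

/-- `σ₀² = E[(1 − π(S))·Ξ₀²]`. -/
def sigma0Sq (c : CARPop Ω 𝒮 d) (mY mD : Bool → 𝒮 → (Fin d → ℝ) → ℝ) : ℝ :=
  ∫ ω, (1 - c.piS (c.S ω)) * (c.Xi0 mY mD ω) ^ 2 ∂c.P

/-- `σ₂² = E[Ξ₂²]`. -/
def sigma2Sq (c : CARPop Ω 𝒮 d) : ℝ := ∫ ω, (c.Xi2 ω) ^ 2 ∂c.P

/-- Asymptotic variance `σ² = (σ₁² + σ₀² + σ₂²)/P(D(1) > D(0))²` of the adjusted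
LATE estimator with working models `mY, mD`. -/
def sigmaSq (c : CARPop Ω 𝒮 d) (mY mD : Bool → 𝒮 → (Fin d → ℝ) → ℝ) : ℝ :=
  (c.sigma1Sq mY mD + c.sigma0Sq mY mD + c.sigma2Sq) / (c.P c.compliers).toReal ^ 2

/-- The population-level assumptions of the CAR setup (Assumption 1 of the paper). -/
structure PopAssumptions (c : CARPop Ω 𝒮 d) : Prop where
  prob : IsProbabilityMeasure c.P
  mY1 : Measurable c.Y1
  mY0 : Measurable c.Y0
  mD1 : Measurable c.D1
  mD0 : Measurable c.D0
  mX : Measurable c.X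
  mS : Measurable c.S
  d1Bin : ∀ ω, c.D1 ω = 0 ∨ c.D1 ω = 1
  d0Bin : ∀ ω, c.D0 ω = 0 ∨ c.D0 ω = 1
  noDefiers : c.P {ω | c.D1 ω = 0 ∧ c.D0 ω = 1} = 0
  compliersPos : 0 < c.P c.compliers
  strataPos : ∀ s, 0 < c.P (c.stratum s)
  piRange : ∃ cc : ℝ, 0 < cc ∧ cc < 1 / 2 ∧ ∀ s, cc < c.piS s ∧ c.piS s < 1 - cc
  momentY : ∃ q C : ℝ, 4 ≤ q ∧ ∀ s,
    c.cEs s (fun ω => |c.Y1 ω| ^ q) ≤ C ∧ c.cEs s (fun ω => |c.Y0 ω| ^ q) ≤ C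
  intY1sq : Integrable (fun ω => c.Y1 ω ^ 2) c.P
  intY0sq : Integrable (fun ω => c.Y0 ω ^ 2) c.P

section Linear

variable {ι : Type*} [Fintype ι] [DecidableEq ι]

/-- Centered regressor `Ψ̃ₛ = Ψₛ(X) − E[Ψₛ(X) | S = s]`. -/
def psiTilt (c : CARPop Ω 𝒮 d) (Ψ : 𝒮 → (Fin d → ℝ) → ι → ℝ) (s : 𝒮) : Ω → ι → ℝ :=
  fun ω j => Ψ s (c.X ω) j - c.cEs s (fun ω' => Ψ s (c.X ω') j)

/-- Within-stratum Gram matrix `E[Ψ̃ₛΨ̃ₛᵀ | S = s]`. -/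
def gram (c : CARPop Ω 𝒮 d) (Ψ : 𝒮 → (Fin d → ℝ) → ι → ℝ) (s : 𝒮) : Matrix ι ι ℝ :=
  Matrix.of fun i j => c.cEs s (fun ω => c.psiTilt Ψ s ω i * c.psiTilt Ψ s ω j)

/-- Optimal linear coefficient `θᴸ(a,s) = (E[Ψ̃Ψ̃ᵀ|S=s])⁻¹ E[Ψ̃·Y(D(a)) | S=s]`. -/
def thetaL (c : CARPop Ω 𝒮 d) (Ψ : 𝒮 → (Fin d → ℝ) → ι → ℝ) (a : Bool) (s : 𝒮) : ι → ℝ :=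
  Matrix.mulVec (c.gram Ψ s)⁻¹ (fun j => c.cEs s (fun ω => c.psiTilt Ψ s ω j * c.Ya a ω))

/-- Optimal linear coefficient `βᴸ(a,s) = (E[Ψ̃Ψ̃ᵀ|S=s])⁻¹ E[Ψ̃·D(a) | S=s]`. -/
def betaL (c : CARPop Ω 𝒮 d) (Ψ : 𝒮 → (Fin d → ℝ) → ι → ℝ) (a : Bool) (s : 𝒮) : ι → ℝ :=
  Matrix.mulVec (c.gram Ψ s)⁻¹ (fun j => c.cEs s (fun ω => c.psiTilt Ψ s ω j * c.Da a ω))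

/-- Linear working model `x ↦ Ψₛ(x)ᵀ t(a,s)`. -/
def linWM (Ψ : 𝒮 → (Fin d → ℝ) → ι → ℝ) (t : Bool → 𝒮 → ι → ℝ) :
    Bool → 𝒮 → (Fin d → ℝ) → ℝ :=
  fun a s x => ∑ j, Ψ s x j * t a s j

/-- Asymptotic variance of the LATE estimator with linear adjustments
`μ̄ʸ(a,s,x) = Ψₛ(x)ᵀ t(a,s)` and `μ̄ᴰ(a,s,x) = Ψₛ(x)ᵀ b(a,s)`. -/
def sigmaSqLin (c : CARPop Ω 𝒮 d) (Ψ : 𝒮 → (Fin d → ℝ) → ι → ℝ)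
    (t b : Bool → 𝒮 → ι → ℝ) : ℝ :=
  c.sigmaSq (linWM Ψ t) (linWM Ψ b)

/-- Regularity of the regressor `Ψ`: measurability, a conditional moment bound of
order `q > 2`, and eigenvalues of the within-stratum Gram matrices of the centered
regressor bounded away from `0` and `∞`. -/
def PsiRegular (c : CARPop Ω 𝒮 d) (Ψ : 𝒮 → (Fin d → ℝ) → ι → ℝ) : Prop :=
  (∀ s, Measurable (Ψ s)) ∧
  (∃ q C : ℝ, 2 < q ∧ ∀ s,
      c.cEs s (fun ω => (∑ j, (Ψ (c.S ω) (c.X ω) j) ^ 2) ^ (q / 2)) ≤ C) ∧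
  (∃ c' C' : ℝ, 0 < c' ∧ c' ≤ C' ∧ ∀ s, ∀ v : ι → ℝ,
      c' * (∑ j, v j ^ 2) ≤ (∑ j, v j * Matrix.mulVec (c.gram Ψ s) v j) ∧
        (∑ j, v j * Matrix.mulVec (c.gram Ψ s) v j) ≤ C' * (∑ j, v j ^ 2))

end Linear

end CARPop

section Stmt3Aux
open CARPop

variable {Ω : Type*} [MeasurableSpace Ω] {𝒮 : Type*} [Fintype 𝒮] [MeasurableSpace 𝒮]
    [MeasurableSingletonClass 𝒮] {d k : ℕ}

private lemma int_mul_of_sq {μ : Measure Ω} {f g : Ω → ℝ}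
    (hf : AEStronglyMeasurable f μ) (hg : AEStronglyMeasurable g μ)
    (hf2 : Integrable (fun ω => f ω ^ 2) μ) (hg2 : Integrable (fun ω => g ω ^ 2) μ) :
    Integrable (fun ω => f ω * g ω) μ := by
  refine (hf2.add hg2).mono' (hf.mul hg) (Filter.Eventually.of_forall fun ω => ?_)
  simp only [Pi.add_apply]
  rw [Real.norm_eq_abs, abs_mul]
  nlinarith [sq_abs (f ω), sq_abs (g ω), abs_nonneg (f ω), abs_nonneg (g ω),
    sq_nonneg (|f ω| - |g ω|)]

private lemma int_of_sq {μ : Measure Ω} [IsFiniteMeasure μ] {f : Ω → ℝ}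
    (hf : AEStronglyMeasurable f μ) (hf2 : Integrable (fun ω => f ω ^ 2) μ) :
    Integrable f μ := by
  refine (hf2.add (integrable_const 1)).mono' hf (Filter.Eventually.of_forall fun ω => ?_)
  simp only [Pi.add_apply]
  rw [Real.norm_eq_abs]
  nlinarith [sq_abs (f ω), sq_nonneg (|f ω| - 1)]

/-- `H = (W - E[W|S=s]) - τ(D(1) - E[D(1)|S=s])`. -/
private def Hf (c : CARPop Ω 𝒮 d) (s : 𝒮) : Ω → ℝ := fun ω =>
  (c.W ω - c.cEs s c.W) - c.tau * (c.Da true ω - c.cEs s (c.Da true))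

private def Gf (c : CARPop Ω 𝒮 d) (s : 𝒮) : Ω → ℝ := fun ω =>
  (c.Z ω - c.cEs s c.Z) - c.tau * (c.Da false ω - c.cEs s (c.Da false))

private def ml (c : CARPop Ω 𝒮 d) (Ψ : 𝒮 → (Fin d → ℝ) → Fin k → ℝ) (s : 𝒮)
    (w : Fin k → ℝ) : Ω → ℝ := fun ω => ∑ j, c.psiTilt Ψ s ω j * w j

private def wOf (c : CARPop Ω 𝒮 d) (t b : Bool → 𝒮 → Fin k → ℝ) (s : 𝒮) : Fin k → ℝ :=
  fun j => (1 - c.piS s) * (t true s j - c.tau * b true s j)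
    + c.piS s * (t false s j - c.tau * b false s j)

private def Bq (c : CARPop Ω 𝒮 d) (Ψ : 𝒮 → (Fin d → ℝ) → Fin k → ℝ) (s : 𝒮)
    (u v : Fin k → ℝ) : ℝ := ∑ j, u j * (c.gram Ψ s).mulVec v j

private def Fo (c : CARPop Ω 𝒮 d) (Ψ : 𝒮 → (Fin d → ℝ) → Fin k → ℝ) (s : 𝒮)
    (w : Fin k → ℝ) : ℝ :=
  (∫ ω in c.stratum s, (Hf c s ω - ml c Ψ s w ω) ^ 2 ∂c.P) / c.piS s
    + (∫ ω in c.stratum s, (Gf c s ω - ml c Ψ s w ω) ^ 2 ∂c.P) / (1 - c.piS s)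

variable {c : CARPop Ω 𝒮 d} {Ψ : 𝒮 → (Fin d → ℝ) → Fin k → ℝ}

private lemma meas_stratum (hc : c.PopAssumptions) (s : 𝒮) : MeasurableSet (c.stratum s) :=
  hc.mS (measurableSet_singleton s)

private lemma ps_pos (hc : c.PopAssumptions) (s : 𝒮) : 0 < (c.P (c.stratum s)).toReal := by
  haveI := hc.prob
  exact ENNReal.toReal_pos (hc.strataPos s).ne' (measure_ne_top _ _)

private lemma pi_pos (hc : c.PopAssumptions) (s : 𝒮) : 0 < c.piS s := by
  obtain ⟨cc, h1, h2, h3⟩ := hc.piRange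
  linarith [(h3 s).1]

private lemma pi_lt_one (hc : c.PopAssumptions) (s : 𝒮) : c.piS s < 1 := by
  obtain ⟨cc, h1, h2, h3⟩ := hc.piRange
  linarith [(h3 s).2]

private lemma meas_Da (hc : c.PopAssumptions) (a : Bool) : Measurable (c.Da a) := by
  cases a
  · exact hc.mD0
  · exact hc.mD1

private lemma meas_Ya (hc : c.PopAssumptions) (a : Bool) : Measurable (c.Ya a) := by
  unfold CARPop.Ya
  exact (hc.mY1.mul (meas_Da hc a)).add (hc.mY0.mul (measurable_const.sub (meas_Da hc a)))

private lemma meas_psiX (hc : c.PopAssumptions) (hΨ : c.PsiRegular Ψ) (s : 𝒮) (j : Fin k) :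
    Measurable (fun ω => Ψ s (c.X ω) j) :=
  (measurable_pi_apply j).comp ((hΨ.1 s).comp hc.mX)

private lemma meas_psiTilt (hc : c.PopAssumptions) (hΨ : c.PsiRegular Ψ) (s : 𝒮) (j : Fin k) :
    Measurable (fun ω => c.psiTilt Ψ s ω j) :=
  (meas_psiX hc hΨ s j).sub measurable_const

private lemma meas_ml (hc : c.PopAssumptions) (hΨ : c.PsiRegular Ψ) (s : 𝒮) (w : Fin k → ℝ) :
    Measurable (ml c Ψ s w) :=
  Finset.measurable_sum _ fun j _ => (meas_psiTilt hc hΨ s j).mul measurable_const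

private lemma meas_Hf (hc : c.PopAssumptions) (s : 𝒮) : Measurable (Hf c s) :=
  ((meas_Ya hc true).sub measurable_const).sub
    (measurable_const.mul ((meas_Da hc true).sub measurable_const))

private lemma meas_Gf (hc : c.PopAssumptions) (s : 𝒮) : Measurable (Gf c s) :=
  ((meas_Ya hc false).sub measurable_const).sub
    (measurable_const.mul ((meas_Da hc false).sub measurable_const))


set_option linter.unusedSectionVars false

private lemma gram_symm (s : 𝒮) (j l : Fin k) : c.gram Ψ s j l = c.gram Ψ s l j := by
  simp only [CARPop.gram, CARPop.cEs, Matrix.of_apply]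
  congr 2
  funext ω
  ring

private lemma gram_ge (hΨ : c.PsiRegular Ψ) (s : 𝒮) (j : Fin k) :
    ∃ c' : ℝ, 0 < c' ∧ c' ≤ c.gram Ψ s j j := by
  obtain ⟨c', C', hc', -, hev⟩ := hΨ.2.2
  refine ⟨c', hc', ?_⟩
  have h := (hev s (Pi.single j 1)).1
  have h1 : ∑ i, (Pi.single j 1 : Fin k → ℝ) i ^ 2 = 1 := by
    simp [Pi.single_apply, sq, mul_ite, Finset.sum_ite_eq']
  have h2 : ∑ i, (Pi.single j 1 : Fin k → ℝ) i * (c.gram Ψ s).mulVec (Pi.single j 1) i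
      = c.gram Ψ s j j := by
    simp [Matrix.mulVec, dotProduct, Pi.single_apply, mul_ite, ite_mul,
      Finset.sum_ite_eq', Finset.sum_ite_eq]
  rw [h1, h2] at h
  linarith

private lemma int_psi_sq (hc : c.PopAssumptions) (hΨ : c.PsiRegular Ψ) (s : 𝒮) (j : Fin k) :
    Integrable (fun ω => c.psiTilt Ψ s ω j ^ 2) (c.P.restrict (c.stratum s)) := by
  by_contra hni
  obtain ⟨c', hc', hle⟩ := gram_ge hΨ s j
  have hg : c.gram Ψ s j j = 0 := by
    simp only [CARPop.gram, CARPop.cEs, Matrix.of_apply]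
    rw [integral_undef, zero_div]
    intro h
    exact hni (by simpa [sq] using h)
  rw [hg] at hle
  linarith

private lemma int_psi (hc : c.PopAssumptions) (hΨ : c.PsiRegular Ψ) (s : 𝒮) (j : Fin k) :
    Integrable (fun ω => c.psiTilt Ψ s ω j) (c.P.restrict (c.stratum s)) := by
  haveI := hc.prob
  haveI : IsFiniteMeasure (c.P.restrict (c.stratum s)) := inferInstance
  exact int_of_sq (meas_psiTilt hc hΨ s j).aestronglyMeasurable (int_psi_sq hc hΨ s j)

private lemma int_psiX (hc : c.PopAssumptions) (hΨ : c.PsiRegular Ψ) (s : 𝒮) (j : Fin k) :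
    Integrable (fun ω => Ψ s (c.X ω) j) (c.P.restrict (c.stratum s)) := by
  haveI := hc.prob
  exact ((int_psi hc hΨ s j).add
      (integrable_const (c.cEs s fun ω' => Ψ s (c.X ω') j))).congr
    (Filter.Eventually.of_forall fun ω => by simp [CARPop.psiTilt])

private lemma integral_psiTilt (hc : c.PopAssumptions) (hΨ : c.PsiRegular Ψ) (s : 𝒮) (j : Fin k) :
    ∫ ω in c.stratum s, c.psiTilt Ψ s ω j ∂c.P = 0 := by
  haveI := hc.prob
  have hps := (ps_pos hc s).ne'
  simp only [CARPop.psiTilt]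
  rw [integral_sub (int_psiX hc hΨ s j) (integrable_const _), integral_const]
  simp only [Measure.restrict_apply_univ, measureReal_restrict_apply_univ, measureReal_def, smul_eq_mul, CARPop.cEs]
  field_simp
  simp

private lemma int_mul_psi_psi (hc : c.PopAssumptions) (hΨ : c.PsiRegular Ψ) (s : 𝒮) (j l : Fin k) :
    Integrable (fun ω => c.psiTilt Ψ s ω j * c.psiTilt Ψ s ω l) (c.P.restrict (c.stratum s)) :=
  int_mul_of_sq (meas_psiTilt hc hΨ s j).aestronglyMeasurable
    (meas_psiTilt hc hΨ s l).aestronglyMeasurable (int_psi_sq hc hΨ s j) (int_psi_sq hc hΨ s l)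

private lemma Da_abs_le (hc : c.PopAssumptions) (a : Bool) (ω : Ω) : |c.Da a ω| ≤ 1 := by
  cases a
  · rcases hc.d0Bin ω with h | h <;> simp [CARPop.Da, h]
  · rcases hc.d1Bin ω with h | h <;> simp [CARPop.Da, h]

private lemma int_Da_sq (hc : c.PopAssumptions) (a : Bool) (μ : Measure Ω) [IsFiniteMeasure μ] :
    Integrable (fun ω => c.Da a ω ^ 2) μ := by
  refine (integrable_const 1).mono' ((meas_Da hc a).pow_const 2).aestronglyMeasurable
    (Filter.Eventually.of_forall fun ω => ?_)
  rw [Real.norm_eq_abs, abs_pow]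
  calc |c.Da a ω| ^ 2 ≤ 1 ^ 2 := by
        exact pow_le_pow_left₀ (abs_nonneg _) (Da_abs_le hc a ω) 2
    _ = 1 := one_pow 2

private lemma int_Ya_sq (hc : c.PopAssumptions) (a : Bool) :
    Integrable (fun ω => c.Ya a ω ^ 2) c.P := by
  refine (hc.intY1sq.add hc.intY0sq).mono'
    (((meas_Ya hc a).pow_const 2).aestronglyMeasurable)
    (Filter.Eventually.of_forall fun ω => ?_)
  simp only [Pi.add_apply]
  rw [Real.norm_eq_abs, abs_of_nonneg (sq_nonneg _)]
  have hbin : c.Da a ω = 0 ∨ c.Da a ω = 1 := by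
    cases a
    · exact hc.d0Bin ω
    · exact hc.d1Bin ω
  rcases hbin with h | h <;>
    · simp only [CARPop.Ya, h]
      nlinarith [sq_nonneg (c.Y1 ω), sq_nonneg (c.Y0 ω)]

private lemma memL2_Hf (hc : c.PopAssumptions) (s : 𝒮) :
    MemLp (Hf c s) 2 (c.P.restrict (c.stratum s)) := by
  haveI := hc.prob
  set μs := c.P.restrict (c.stratum s)
  have hW : MemLp c.W 2 μs := (memLp_two_iff_integrable_sq
    (meas_Ya hc true).aestronglyMeasurable).2 (int_Ya_sq hc true).restrict
  have hD : MemLp (c.Da true) 2 μs := (memLp_two_iff_integrable_sq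
    (meas_Da hc true).aestronglyMeasurable).2 (int_Da_sq hc true μs)
  have h := (hW.sub (memLp_const (c.cEs s c.W))).sub
    (((hD.sub (memLp_const (c.cEs s (c.Da true)))).const_mul c.tau))
  exact h.ae_eq (Filter.Eventually.of_forall fun ω => by simp [Hf])

private lemma memL2_Gf (hc : c.PopAssumptions) (s : 𝒮) :
    MemLp (Gf c s) 2 (c.P.restrict (c.stratum s)) := by
  haveI := hc.prob
  set μs := c.P.restrict (c.stratum s)
  have hW : MemLp c.Z 2 μs := (memLp_two_iff_integrable_sq
    (meas_Ya hc false).aestronglyMeasurable).2 (int_Ya_sq hc false).restrict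
  have hD : MemLp (c.Da false) 2 μs := (memLp_two_iff_integrable_sq
    (meas_Da hc false).aestronglyMeasurable).2 (int_Da_sq hc false μs)
  have h := (hW.sub (memLp_const (c.cEs s c.Z))).sub
    (((hD.sub (memLp_const (c.cEs s (c.Da false)))).const_mul c.tau))
  exact h.ae_eq (Filter.Eventually.of_forall fun ω => by simp [Gf])

private lemma int_Hf_sq (hc : c.PopAssumptions) (s : 𝒮) :
    Integrable (fun ω => Hf c s ω ^ 2) (c.P.restrict (c.stratum s)) :=
  (memL2_Hf hc s).integrable_sq

private lemma int_Gf_sq (hc : c.PopAssumptions) (s : 𝒮) :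
    Integrable (fun ω => Gf c s ω ^ 2) (c.P.restrict (c.stratum s)) :=
  (memL2_Gf hc s).integrable_sq

private lemma int_Hf_psi (hc : c.PopAssumptions) (hΨ : c.PsiRegular Ψ) (s : 𝒮) (j : Fin k) :
    Integrable (fun ω => Hf c s ω * c.psiTilt Ψ s ω j) (c.P.restrict (c.stratum s)) :=
  int_mul_of_sq (meas_Hf hc s).aestronglyMeasurable
    (meas_psiTilt hc hΨ s j).aestronglyMeasurable (int_Hf_sq hc s) (int_psi_sq hc hΨ s j)

private lemma int_Gf_psi (hc : c.PopAssumptions) (hΨ : c.PsiRegular Ψ) (s : 𝒮) (j : Fin k) :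
    Integrable (fun ω => Gf c s ω * c.psiTilt Ψ s ω j) (c.P.restrict (c.stratum s)) :=
  int_mul_of_sq (meas_Gf hc s).aestronglyMeasurable
    (meas_psiTilt hc hΨ s j).aestronglyMeasurable (int_Gf_sq hc s) (int_psi_sq hc hΨ s j)

private lemma int_psi_Ya (hc : c.PopAssumptions) (hΨ : c.PsiRegular Ψ) (s : 𝒮) (j : Fin k)
    (a : Bool) :
    Integrable (fun ω => c.psiTilt Ψ s ω j * c.Ya a ω) (c.P.restrict (c.stratum s)) :=
  int_mul_of_sq (meas_psiTilt hc hΨ s j).aestronglyMeasurable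
    (meas_Ya hc a).aestronglyMeasurable (int_psi_sq hc hΨ s j) (int_Ya_sq hc a).restrict

private lemma int_psi_Da (hc : c.PopAssumptions) (hΨ : c.PsiRegular Ψ) (s : 𝒮) (j : Fin k)
    (a : Bool) :
    Integrable (fun ω => c.psiTilt Ψ s ω j * c.Da a ω) (c.P.restrict (c.stratum s)) := by
  haveI := hc.prob
  exact int_mul_of_sq (meas_psiTilt hc hΨ s j).aestronglyMeasurable
    (meas_Da hc a).aestronglyMeasurable (int_psi_sq hc hΨ s j) (int_Da_sq hc a _)

private lemma mem_stratum {s : 𝒮} {ω : Ω} (h : ω ∈ c.stratum s) : c.S ω = s := h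

private lemma ml_wOf (s : 𝒮) (ω : Ω) (t b : Bool → 𝒮 → Fin k → ℝ) :
    ml c Ψ s (wOf c t b s) ω
      = (1 - c.piS s) * (ml c Ψ s (t true s) ω - c.tau * ml c Ψ s (b true s) ω)
        + c.piS s * (ml c Ψ s (t false s) ω - c.tau * ml c Ψ s (b false s) ω) := by
  simp only [ml, wOf, Finset.mul_sum, ← Finset.sum_sub_distrib, ← Finset.sum_add_distrib]
  exact Finset.sum_congr rfl fun j _ => by ring

private lemma cEs_linWM (hc : c.PopAssumptions) (hΨ : c.PsiRegular Ψ) (s : 𝒮)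
    (t : Bool → 𝒮 → Fin k → ℝ) (a : Bool) :
    c.cEs s (c.wm (linWM Ψ t) a)
      = ∑ j, c.cEs s (fun ω' => Ψ s (c.X ω') j) * t a s j := by
  unfold CARPop.cEs
  rw [setIntegral_congr_fun (meas_stratum hc s)
    (g := fun ω' => ∑ j, Ψ s (c.X ω') j * t a s j)
    (fun ω' hω' => by simp [CARPop.wm, CARPop.linWM, mem_stratum hω'])]
  rw [integral_finset_sum _ fun j _ => (int_psiX hc hΨ s j).mul_const _]
  rw [Finset.sum_div]
  exact Finset.sum_congr rfl fun j _ => by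
    rw [integral_mul_const, mul_div_right_comm]

private lemma tilt_linWM (hc : c.PopAssumptions) (hΨ : c.PsiRegular Ψ) {s : 𝒮} {ω : Ω}
    (hω : c.S ω = s) (t : Bool → 𝒮 → Fin k → ℝ) (a : Bool) :
    c.tilt (c.wm (linWM Ψ t) a) ω = ml c Ψ s (t a s) ω := by
  unfold CARPop.tilt CARPop.cES
  rw [hω, cEs_linWM hc hΨ s t a]
  simp only [CARPop.wm, CARPop.linWM, hω, ml, CARPop.psiTilt, ← Finset.sum_sub_distrib]
  exact Finset.sum_congr rfl fun j _ => by ring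

private lemma tilt_apply {f : Ω → ℝ} {s : 𝒮} {ω : Ω} (hω : c.S ω = s) :
    c.tilt f ω = f ω - c.cEs s f := by
  simp [CARPop.tilt, CARPop.cES, hω]

private lemma xi1_on (hc : c.PopAssumptions) (hΨ : c.PsiRegular Ψ) {s : 𝒮} {ω : Ω}
    (hω : c.S ω = s) (t b : Bool → 𝒮 → Fin k → ℝ) :
    c.piS (c.S ω) * (c.Xi1 (linWM Ψ t) (linWM Ψ b) ω) ^ 2
      = (Hf c s ω - ml c Ψ s (wOf c t b s) ω) ^ 2 / c.piS s := by
  have hπ := (pi_pos hc s).ne'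
  unfold CARPop.Xi1
  rw [hω, tilt_linWM hc hΨ hω t true, tilt_linWM hc hΨ hω t false,
    tilt_linWM hc hΨ hω b true, tilt_linWM hc hΨ hω b false,
    tilt_apply hω, tilt_apply hω, ml_wOf]
  unfold Hf
  field_simp
  ring

private lemma xi0_on (hc : c.PopAssumptions) (hΨ : c.PsiRegular Ψ) {s : 𝒮} {ω : Ω}
    (hω : c.S ω = s) (t b : Bool → 𝒮 → Fin k → ℝ) :
    (1 - c.piS (c.S ω)) * (c.Xi0 (linWM Ψ t) (linWM Ψ b) ω) ^ 2
      = (Gf c s ω - ml c Ψ s (wOf c t b s) ω) ^ 2 / (1 - c.piS s) := by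
  have hπ : (1 : ℝ) - c.piS s ≠ 0 := by have := pi_lt_one hc s; intro h; linarith
  unfold CARPop.Xi0
  rw [hω, tilt_linWM hc hΨ hω t true, tilt_linWM hc hΨ hω t false,
    tilt_linWM hc hΨ hω b true, tilt_linWM hc hΨ hω b false,
    tilt_apply hω, tilt_apply hω, ml_wOf]
  unfold Gf
  field_simp
  ring

private lemma gram_mul_ps (hc : c.PopAssumptions) (s : 𝒮) (j l : Fin k) :
    (c.P (c.stratum s)).toReal * c.gram Ψ s j l
      = ∫ ω in c.stratum s, c.psiTilt Ψ s ω j * c.psiTilt Ψ s ω l ∂c.P := by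
  simp only [CARPop.gram, Matrix.of_apply, CARPop.cEs]
  rw [mul_comm, div_mul_cancel₀ _ (ps_pos hc s).ne']

private lemma sq_expand (hc : c.PopAssumptions) (hΨ : c.PsiRegular Ψ) (s : 𝒮) {F : Ω → ℝ}
    (hF2 : Integrable (fun ω => F ω ^ 2) (c.P.restrict (c.stratum s)))
    (hFψ : ∀ j, Integrable (fun ω => F ω * c.psiTilt Ψ s ω j) (c.P.restrict (c.stratum s)))
    (w : Fin k → ℝ) :
    Integrable (fun ω => (F ω - ml c Ψ s w ω) ^ 2) (c.P.restrict (c.stratum s)) ∧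
      ∫ ω in c.stratum s, (F ω - ml c Ψ s w ω) ^ 2 ∂c.P
        = (∫ ω in c.stratum s, F ω ^ 2 ∂c.P)
          - 2 * ∑ j, w j * ∫ ω in c.stratum s, F ω * c.psiTilt Ψ s ω j ∂c.P
          + (c.P (c.stratum s)).toReal * Bq c Ψ s w w := by
  have hpt : ∀ ω, (F ω - ml c Ψ s w ω) ^ 2
      = F ω ^ 2 - (∑ j, (2 * w j) * (F ω * c.psiTilt Ψ s ω j))
        + ∑ j, ∑ l, (w j * w l) * (c.psiTilt Ψ s ω j * c.psiTilt Ψ s ω l) := by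
    intro ω
    have e1 : ml c Ψ s w ω ^ 2
        = ∑ j, ∑ l, (w j * w l) * (c.psiTilt Ψ s ω j * c.psiTilt Ψ s ω l) := by
      rw [sq]
      show (∑ j, c.psiTilt Ψ s ω j * w j) * (∑ l, c.psiTilt Ψ s ω l * w l) = _
      rw [Finset.sum_mul_sum]
      exact Finset.sum_congr rfl fun j _ => Finset.sum_congr rfl fun l _ => by ring
    have e2 : 2 * F ω * ml c Ψ s w ω = ∑ j, (2 * w j) * (F ω * c.psiTilt Ψ s ω j) := by
      show 2 * F ω * (∑ j, c.psiTilt Ψ s ω j * w j) = _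
      rw [Finset.mul_sum]
      exact Finset.sum_congr rfl fun j _ => by ring
    rw [sub_sq, e1, ← e2]
  have hint2 : Integrable (fun ω => ∑ j, (2 * w j) * (F ω * c.psiTilt Ψ s ω j))
      (c.P.restrict (c.stratum s)) :=
    integrable_finset_sum _ fun j _ => (hFψ j).const_mul _
  have hint3 : Integrable
      (fun ω => ∑ j, ∑ l, (w j * w l) * (c.psiTilt Ψ s ω j * c.psiTilt Ψ s ω l))
      (c.P.restrict (c.stratum s)) :=
    integrable_finset_sum _ fun j _ => integrable_finset_sum _ fun l _ =>
      (int_mul_psi_psi hc hΨ s j l).const_mul _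
  have hsub : Integrable (fun ω => F ω ^ 2 - ∑ j, (2 * w j) * (F ω * c.psiTilt Ψ s ω j))
      (c.P.restrict (c.stratum s)) := hF2.sub hint2
  have hT : Integrable (fun ω => (F ω ^ 2 - ∑ j, (2 * w j) * (F ω * c.psiTilt Ψ s ω j))
      + ∑ j, ∑ l, (w j * w l) * (c.psiTilt Ψ s ω j * c.psiTilt Ψ s ω l))
      (c.P.restrict (c.stratum s)) := hsub.add hint3
  refine ⟨hT.congr (Filter.Eventually.of_forall fun ω => ?_), ?_⟩
  · exact (hpt ω).symm
  · rw [integral_congr_ae (Filter.Eventually.of_forall hpt)]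
    rw [integral_add hsub hint3, integral_sub hF2 hint2,
      integral_finset_sum _ (fun j _ => (hFψ j).const_mul _),
      integral_finset_sum _ (fun j _ => integrable_finset_sum _ fun l _ =>
        (int_mul_psi_psi hc hΨ s j l).const_mul _)]
    congr 1
    · congr 1
      rw [Finset.mul_sum]
      exact Finset.sum_congr rfl fun j _ => by
        rw [integral_const_mul]; ring
    · have : ∀ j ∈ Finset.univ (α := Fin k),
          (∫ ω in c.stratum s, ∑ l, (w j * w l) * (c.psiTilt Ψ s ω j * c.psiTilt Ψ s ω l) ∂c.P)
            = ∑ l, (w j * w l) * ((c.P (c.stratum s)).toReal * c.gram Ψ s j l) := by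
        intro j _
        rw [integral_finset_sum _ (fun l _ => (int_mul_psi_psi hc hΨ s j l).const_mul _)]
        exact Finset.sum_congr rfl fun l _ => by
          rw [integral_const_mul, gram_mul_ps hc]
      rw [Finset.sum_congr rfl this]
      simp only [Bq, Matrix.mulVec, dotProduct, Finset.mul_sum]
      exact Finset.sum_congr rfl fun j _ => Finset.sum_congr rfl fun l _ => by ring

private lemma integral_strata (hc : c.PopAssumptions) {f : Ω → ℝ}
    (hm : ∀ s, IntegrableOn f (c.stratum s) c.P) :
    ∫ ω, f ω ∂c.P = ∑ s, ∫ ω in c.stratum s, f ω ∂c.P := by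
  have hU : (⋃ s, c.stratum s) = Set.univ :=
    Set.eq_univ_of_forall fun ω => Set.mem_iUnion.2 ⟨c.S ω, rfl⟩
  have hd : Pairwise (Function.onFun Disjoint fun s => c.stratum s) := by
    intro s s' hss'
    exact Set.disjoint_left.2 fun ω h1 h2 =>
      hss' ((mem_stratum (c := c) h1).symm.trans (mem_stratum (c := c) h2))
  have hint : IntegrableOn f (⋃ s, c.stratum s) c.P := by
    rw [show (⋃ s, c.stratum s) = ⋃ s ∈ (Finset.univ : Finset 𝒮), c.stratum s by simp]
    exact integrableOn_finset_iUnion.2 fun s _ => hm s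
  calc ∫ ω, f ω ∂c.P = ∫ ω in (⋃ s, c.stratum s), f ω ∂c.P := by
        rw [hU, Measure.restrict_univ]
    _ = ∑' s, ∫ ω in c.stratum s, f ω ∂c.P :=
        integral_iUnion (fun s => meas_stratum hc s) hd hint
    _ = ∑ s, ∫ ω in c.stratum s, f ω ∂c.P := tsum_fintype _

private lemma sigma1_decomp (hc : c.PopAssumptions) (hΨ : c.PsiRegular Ψ)
    (t b : Bool → 𝒮 → Fin k → ℝ) :
    c.sigma1Sq (linWM Ψ t) (linWM Ψ b)
      = ∑ s, (∫ ω in c.stratum s, (Hf c s ω - ml c Ψ s (wOf c t b s) ω) ^ 2 ∂c.P) / c.piS s := by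
  have hio : ∀ s : 𝒮, IntegrableOn
      (fun ω => c.piS (c.S ω) * (c.Xi1 (linWM Ψ t) (linWM Ψ b) ω) ^ 2) (c.stratum s) c.P := by
    intro s
    exact MeasureTheory.IntegrableOn.congr_fun
      ((sq_expand hc hΨ s (int_Hf_sq hc s) (fun j => int_Hf_psi hc hΨ s j)
        (wOf c t b s)).1.div_const (c.piS s))
      (fun ω hω => (xi1_on hc hΨ (mem_stratum hω) t b).symm) (meas_stratum hc s)
  rw [CARPop.sigma1Sq, integral_strata hc hio]
  exact Finset.sum_congr rfl fun s _ => by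
    rw [setIntegral_congr_fun (meas_stratum hc s)
      (g := fun ω => (Hf c s ω - ml c Ψ s (wOf c t b s) ω) ^ 2 / c.piS s)
      (fun ω hω => xi1_on hc hΨ (mem_stratum hω) t b), integral_div]

private lemma sigma0_decomp (hc : c.PopAssumptions) (hΨ : c.PsiRegular Ψ)
    (t b : Bool → 𝒮 → Fin k → ℝ) :
    c.sigma0Sq (linWM Ψ t) (linWM Ψ b)
      = ∑ s, (∫ ω in c.stratum s, (Gf c s ω - ml c Ψ s (wOf c t b s) ω) ^ 2 ∂c.P)
          / (1 - c.piS s) := by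
  have hio : ∀ s : 𝒮, IntegrableOn
      (fun ω => (1 - c.piS (c.S ω)) * (c.Xi0 (linWM Ψ t) (linWM Ψ b) ω) ^ 2) (c.stratum s) c.P := by
    intro s
    exact MeasureTheory.IntegrableOn.congr_fun
      ((sq_expand hc hΨ s (int_Gf_sq hc s) (fun j => int_Gf_psi hc hΨ s j)
        (wOf c t b s)).1.div_const (1 - c.piS s))
      (fun ω hω => (xi0_on hc hΨ (mem_stratum hω) t b).symm) (meas_stratum hc s)
  rw [CARPop.sigma0Sq, integral_strata hc hio]
  exact Finset.sum_congr rfl fun s _ => by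
    rw [setIntegral_congr_fun (meas_stratum hc s)
      (g := fun ω => (Gf c s ω - ml c Ψ s (wOf c t b s) ω) ^ 2 / (1 - c.piS s))
      (fun ω hω => xi0_on hc hΨ (mem_stratum hω) t b), integral_div]

private lemma sigma_decomp (hc : c.PopAssumptions) (hΨ : c.PsiRegular Ψ)
    (t b : Bool → 𝒮 → Fin k → ℝ) :
    c.sigma1Sq (linWM Ψ t) (linWM Ψ b) + c.sigma0Sq (linWM Ψ t) (linWM Ψ b)
      = ∑ s, Fo c Ψ s (wOf c t b s) := by
  rw [sigma1_decomp hc hΨ t b, sigma0_decomp hc hΨ t b, ← Finset.sum_add_distrib]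
  exact Finset.sum_congr rfl fun s _ => rfl

private lemma Bq_lower (hΨ : c.PsiRegular Ψ) (s : 𝒮) (u : Fin k → ℝ) :
    ∃ c' : ℝ, 0 < c' ∧ c' * (∑ j, u j ^ 2) ≤ Bq c Ψ s u u := by
  obtain ⟨c', C', hc', -, hev⟩ := hΨ.2.2
  exact ⟨c', hc', (hev s u).1⟩

private lemma Bq_nonneg (hΨ : c.PsiRegular Ψ) (s : 𝒮) (u : Fin k → ℝ) :
    0 ≤ Bq c Ψ s u u := by
  obtain ⟨c', hc', h⟩ := Bq_lower hΨ s u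
  have h0 : (0:ℝ) ≤ c' * ∑ j, u j ^ 2 := by positivity
  linarith

private lemma Bq_zero (hΨ : c.PsiRegular Ψ) (s : 𝒮) (u : Fin k → ℝ)
    (h : Bq c Ψ s u u ≤ 0) : u = 0 := by
  obtain ⟨c', hc', hl⟩ := Bq_lower hΨ s u
  have hs0 : ∑ j, u j ^ 2 ≤ 0 := by nlinarith [Finset.sum_nonneg (fun j (_ : j ∈ Finset.univ) => sq_nonneg (u j))]
  have hs : ∑ j, u j ^ 2 = 0 :=
    le_antisymm hs0 (Finset.sum_nonneg fun j _ => sq_nonneg (u j))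
  funext j
  have := (Finset.sum_eq_zero_iff_of_nonneg (fun i (_ : i ∈ Finset.univ) => sq_nonneg (u i))).1 hs j
    (Finset.mem_univ j)
  exact pow_eq_zero_iff two_ne_zero |>.1 this

private lemma gram_posdef (hΨ : c.PsiRegular Ψ) (s : 𝒮) : (c.gram Ψ s).PosDef := by
  refine Matrix.PosDef.of_dotProduct_mulVec_pos (Matrix.ext fun i j => ?_) fun x hx => ?_
  · rw [Matrix.conjTranspose_apply, star_trivial, gram_symm]
  · obtain ⟨c', hc', h⟩ := Bq_lower hΨ s x
    have hpos : 0 < ∑ j, x j ^ 2 := by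
      obtain ⟨j, hj⟩ : ∃ j, x j ≠ 0 := by
        by_contra hall
        push_neg at hall
        exact hx (funext fun j => hall j)
      exact Finset.sum_pos' (fun i _ => sq_nonneg _)
        ⟨j, Finset.mem_univ j, by positivity⟩
    have hst : star x = x := funext fun i => star_trivial _
    rw [hst]
    have : (0:ℝ) < c' * ∑ j, x j ^ 2 := by positivity
    calc (0:ℝ) < c' * ∑ j, x j ^ 2 := this
      _ ≤ Bq c Ψ s x x := h
      _ = dotProduct x ((c.gram Ψ s).mulVec x) := rfl

private lemma gram_isUnit_det (hΨ : c.PsiRegular Ψ) (s : 𝒮) : IsUnit (c.gram Ψ s).det :=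
  isUnit_iff_ne_zero.2 (gram_posdef hΨ s).det_pos.ne'

private lemma gram_mulVec_thetaL (hΨ : c.PsiRegular Ψ) (s : 𝒮) (a : Bool) :
    (c.gram Ψ s).mulVec (c.thetaL Ψ a s)
      = fun j => c.cEs s fun ω => c.psiTilt Ψ s ω j * c.Ya a ω := by
  rw [CARPop.thetaL, Matrix.mulVec_mulVec, Matrix.mul_nonsing_inv _ (gram_isUnit_det hΨ s),
    Matrix.one_mulVec]

private lemma gram_mulVec_betaL (hΨ : c.PsiRegular Ψ) (s : 𝒮) (a : Bool) :
    (c.gram Ψ s).mulVec (c.betaL Ψ a s)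
      = fun j => c.cEs s fun ω => c.psiTilt Ψ s ω j * c.Da a ω := by
  rw [CARPop.betaL, Matrix.mulVec_mulVec, Matrix.mul_nonsing_inv _ (gram_isUnit_det hΨ s),
    Matrix.one_mulVec]

private lemma ps_mul_cEs (hc : c.PopAssumptions) (s : 𝒮) (f : Ω → ℝ) :
    (c.P (c.stratum s)).toReal * c.cEs s f = ∫ ω in c.stratum s, f ω ∂c.P := by
  rw [CARPop.cEs, mul_comm, div_mul_cancel₀ _ (ps_pos hc s).ne']

private lemma int_Hf_psi_eq (hc : c.PopAssumptions) (hΨ : c.PsiRegular Ψ) (s : 𝒮) (j : Fin k) :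
    ∫ ω in c.stratum s, Hf c s ω * c.psiTilt Ψ s ω j ∂c.P
      = (c.P (c.stratum s)).toReal
          * ((c.gram Ψ s).mulVec (c.thetaL Ψ true s) j
              - c.tau * (c.gram Ψ s).mulVec (c.betaL Ψ true s) j) := by
  haveI := hc.prob
  have hpt : ∀ ω, Hf c s ω * c.psiTilt Ψ s ω j
      = (c.psiTilt Ψ s ω j * c.Ya true ω - c.tau * (c.psiTilt Ψ s ω j * c.Da true ω))
        + (c.tau * c.cEs s (c.Da true) - c.cEs s c.W) * c.psiTilt Ψ s ω j := by
    intro ω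
    simp only [Hf, CARPop.W]
    ring
  rw [integral_congr_ae (Filter.Eventually.of_forall hpt)]
  have h1 : Integrable (fun ω => c.psiTilt Ψ s ω j * c.Ya true ω
      - c.tau * (c.psiTilt Ψ s ω j * c.Da true ω)) (c.P.restrict (c.stratum s)) :=
    (int_psi_Ya hc hΨ s j true).sub ((int_psi_Da hc hΨ s j true).const_mul _)
  have h2 : Integrable (fun ω => (c.tau * c.cEs s (c.Da true) - c.cEs s c.W)
      * c.psiTilt Ψ s ω j) (c.P.restrict (c.stratum s)) := (int_psi hc hΨ s j).const_mul _
  rw [integral_add h1 h2, integral_sub (int_psi_Ya hc hΨ s j true)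
    ((int_psi_Da hc hΨ s j true).const_mul _), integral_const_mul, integral_const_mul,
    integral_psiTilt hc hΨ s j, mul_zero, add_zero]
  rw [gram_mulVec_thetaL hΨ s true, gram_mulVec_betaL hΨ s true]
  rw [mul_sub, ps_mul_cEs hc s, ← mul_assoc, mul_comm ((c.P (c.stratum s)).toReal) c.tau,
    mul_assoc, ps_mul_cEs hc s]

private lemma int_Gf_psi_eq (hc : c.PopAssumptions) (hΨ : c.PsiRegular Ψ) (s : 𝒮) (j : Fin k) :
    ∫ ω in c.stratum s, Gf c s ω * c.psiTilt Ψ s ω j ∂c.P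
      = (c.P (c.stratum s)).toReal
          * ((c.gram Ψ s).mulVec (c.thetaL Ψ false s) j
              - c.tau * (c.gram Ψ s).mulVec (c.betaL Ψ false s) j) := by
  haveI := hc.prob
  have hpt : ∀ ω, Gf c s ω * c.psiTilt Ψ s ω j
      = (c.psiTilt Ψ s ω j * c.Ya false ω - c.tau * (c.psiTilt Ψ s ω j * c.Da false ω))
        + (c.tau * c.cEs s (c.Da false) - c.cEs s c.Z) * c.psiTilt Ψ s ω j := by
    intro ω
    simp only [Gf, CARPop.Z]
    ring
  rw [integral_congr_ae (Filter.Eventually.of_forall hpt)]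
  have h1 : Integrable (fun ω => c.psiTilt Ψ s ω j * c.Ya false ω
      - c.tau * (c.psiTilt Ψ s ω j * c.Da false ω)) (c.P.restrict (c.stratum s)) :=
    (int_psi_Ya hc hΨ s j false).sub ((int_psi_Da hc hΨ s j false).const_mul _)
  have h2 : Integrable (fun ω => (c.tau * c.cEs s (c.Da false) - c.cEs s c.Z)
      * c.psiTilt Ψ s ω j) (c.P.restrict (c.stratum s)) := (int_psi hc hΨ s j).const_mul _
  rw [integral_add h1 h2, integral_sub (int_psi_Ya hc hΨ s j false)
    ((int_psi_Da hc hΨ s j false).const_mul _), integral_const_mul, integral_const_mul,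
    integral_psiTilt hc hΨ s j, mul_zero, add_zero]
  rw [gram_mulVec_thetaL hΨ s false, gram_mulVec_betaL hΨ s false]
  rw [mul_sub, ps_mul_cEs hc s, ← mul_assoc, mul_comm ((c.P (c.stratum s)).toReal) c.tau,
    mul_assoc, ps_mul_cEs hc s]

private lemma wOf_smul_form (t b : Bool → 𝒮 → Fin k → ℝ) (s : 𝒮) :
    wOf c t b s
      = (1 - c.piS s) • (t true s - c.tau • b true s)
        + c.piS s • (t false s - c.tau • b false s) := by
  funext j
  simp [wOf, smul_eq_mul]

private lemma Bq_wOf_theta (hc : c.PopAssumptions) (hΨ : c.PsiRegular Ψ) (s : 𝒮)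
    (w : Fin k → ℝ) :
    Bq c Ψ s w (wOf c (c.thetaL Ψ) (c.betaL Ψ) s)
      = (1 - c.piS s) * (∑ j, w j * ((c.gram Ψ s).mulVec (c.thetaL Ψ true s) j
            - c.tau * (c.gram Ψ s).mulVec (c.betaL Ψ true s) j))
        + c.piS s * (∑ j, w j * ((c.gram Ψ s).mulVec (c.thetaL Ψ false s) j
            - c.tau * (c.gram Ψ s).mulVec (c.betaL Ψ false s) j)) := by
  simp only [Bq]
  rw [wOf_smul_form, Matrix.mulVec_add, Matrix.mulVec_smul, Matrix.mulVec_smul,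
    Matrix.mulVec_sub, Matrix.mulVec_sub, Matrix.mulVec_smul, Matrix.mulVec_smul]
  rw [Finset.mul_sum, Finset.mul_sum, ← Finset.sum_add_distrib]
  refine Finset.sum_congr rfl fun j _ => ?_
  simp only [Pi.add_apply, Pi.smul_apply, Pi.sub_apply, smul_eq_mul]
  ring

private lemma Fo_eq (hc : c.PopAssumptions) (hΨ : c.PsiRegular Ψ) (s : 𝒮) (w : Fin k → ℝ) :
    Fo c Ψ s w
      = (∫ ω in c.stratum s, Hf c s ω ^ 2 ∂c.P) / c.piS s
        + (∫ ω in c.stratum s, Gf c s ω ^ 2 ∂c.P) / (1 - c.piS s)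
        + ((c.P (c.stratum s)).toReal / (c.piS s * (1 - c.piS s)))
          * (Bq c Ψ s w w - 2 * Bq c Ψ s w (wOf c (c.thetaL Ψ) (c.betaL Ψ) s)) := by
  have hπ0 := (pi_pos hc s).ne'
  have hπ1 : (1:ℝ) - c.piS s ≠ 0 := by
    have := pi_lt_one hc s
    intro h'
    linarith
  obtain ⟨-, eH⟩ := sq_expand hc hΨ s (int_Hf_sq hc s) (fun j => int_Hf_psi hc hΨ s j) w
  obtain ⟨-, eG⟩ := sq_expand hc hΨ s (int_Gf_sq hc s) (fun j => int_Gf_psi hc hΨ s j) w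
  have eSH : (∑ j, w j * ∫ ω in c.stratum s, Hf c s ω * c.psiTilt Ψ s ω j ∂c.P)
      = (c.P (c.stratum s)).toReal * ∑ j, w j * ((c.gram Ψ s).mulVec (c.thetaL Ψ true s) j
          - c.tau * (c.gram Ψ s).mulVec (c.betaL Ψ true s) j) := by
    rw [Finset.mul_sum]
    refine Finset.sum_congr rfl fun j _ => ?_
    rw [int_Hf_psi_eq hc hΨ s j]
    ring
  have eSG : (∑ j, w j * ∫ ω in c.stratum s, Gf c s ω * c.psiTilt Ψ s ω j ∂c.P)
      = (c.P (c.stratum s)).toReal * ∑ j, w j * ((c.gram Ψ s).mulVec (c.thetaL Ψ false s) j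
          - c.tau * (c.gram Ψ s).mulVec (c.betaL Ψ false s) j) := by
    rw [Finset.mul_sum]
    refine Finset.sum_congr rfl fun j _ => ?_
    rw [int_Gf_psi_eq hc hΨ s j]
    ring
  rw [Fo, eH, eG, eSH, eSG, Bq_wOf_theta hc hΨ s w]
  field_simp
  ring

private lemma Bq_symm (s : 𝒮) (u v : Fin k → ℝ) : Bq c Ψ s u v = Bq c Ψ s v u := by
  simp only [Bq, Matrix.mulVec, dotProduct, Finset.mul_sum]
  rw [Finset.sum_comm]
  exact Finset.sum_congr rfl fun l _ => Finset.sum_congr rfl fun j _ => by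
    rw [gram_symm (c := c) (Ψ := Ψ) s j l]
    ring

private lemma Bq_bilin (s : 𝒮) (u v : Fin k → ℝ) :
    Bq c Ψ s (u - v) (u - v)
      = Bq c Ψ s u u - Bq c Ψ s u v - Bq c Ψ s v u + Bq c Ψ s v v := by
  simp only [Bq, Matrix.mulVec_sub, Pi.sub_apply, sub_mul, mul_sub, Finset.sum_sub_distrib]
  ring

private lemma Fo_diff (hc : c.PopAssumptions) (hΨ : c.PsiRegular Ψ) (s : 𝒮) (w : Fin k → ℝ) :
    Fo c Ψ s w
      = Fo c Ψ s (wOf c (c.thetaL Ψ) (c.betaL Ψ) s)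
        + ((c.P (c.stratum s)).toReal / (c.piS s * (1 - c.piS s)))
          * Bq c Ψ s (w - wOf c (c.thetaL Ψ) (c.betaL Ψ) s)
              (w - wOf c (c.thetaL Ψ) (c.betaL Ψ) s) := by
  rw [Fo_eq hc hΨ s w, Fo_eq hc hΨ s (wOf c (c.thetaL Ψ) (c.betaL Ψ) s),
    Bq_bilin, Bq_symm (c := c) (Ψ := Ψ) s w (wOf c (c.thetaL Ψ) (c.betaL Ψ) s)]
  ring

private lemma cond_iff (hc : c.PopAssumptions) (s : 𝒮) (t b : Bool → 𝒮 → Fin k → ℝ) :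
    (Real.sqrt ((1 - c.piS s) / c.piS s) • (t true s - c.tau • b true s)
        + Real.sqrt (c.piS s / (1 - c.piS s)) • (t false s - c.tau • b false s)
      = Real.sqrt ((1 - c.piS s) / c.piS s) • (c.thetaL Ψ true s - c.tau • c.betaL Ψ true s)
        + Real.sqrt (c.piS s / (1 - c.piS s))
            • (c.thetaL Ψ false s - c.tau • c.betaL Ψ false s))
    ↔ wOf c t b s = wOf c (c.thetaL Ψ) (c.betaL Ψ) s := by
  have hπ0 := pi_pos hc s
  have hπ1 : (0:ℝ) < 1 - c.piS s := by
    have := pi_lt_one hc s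
    linarith
  set r := Real.sqrt (c.piS s * (1 - c.piS s)) with hr
  have hrpos : 0 < r := Real.sqrt_pos.2 (by positivity)
  have hkey : ∀ u v : Fin k → ℝ,
      r • (Real.sqrt ((1 - c.piS s) / c.piS s) • u + Real.sqrt (c.piS s / (1 - c.piS s)) • v)
        = (1 - c.piS s) • u + c.piS s • v := by
    intro u v
    have e1 : r * Real.sqrt ((1 - c.piS s) / c.piS s) = 1 - c.piS s := by
      rw [hr, ← Real.sqrt_mul (by positivity)]
      rw [show c.piS s * (1 - c.piS s) * ((1 - c.piS s) / c.piS s) = (1 - c.piS s) ^ 2 by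
        field_simp]
      exact Real.sqrt_sq hπ1.le
    have e2 : r * Real.sqrt (c.piS s / (1 - c.piS s)) = c.piS s := by
      rw [hr, ← Real.sqrt_mul (by positivity)]
      rw [show c.piS s * (1 - c.piS s) * (c.piS s / (1 - c.piS s)) = c.piS s ^ 2 by
        field_simp]
      exact Real.sqrt_sq hπ0.le
    funext j
    simp only [Pi.add_apply, Pi.smul_apply, smul_eq_mul]
    rw [mul_add, ← mul_assoc, ← mul_assoc, e1, e2]
  constructor
  · intro h
    have h2 := congrArg (fun x => r • x) h
    rw [hkey, hkey] at h2
    rw [wOf_smul_form, wOf_smul_form]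
    exact h2
  · intro h
    have h2 : (1 - c.piS s) • (t true s - c.tau • b true s)
          + c.piS s • (t false s - c.tau • b false s)
        = (1 - c.piS s) • (c.thetaL Ψ true s - c.tau • c.betaL Ψ true s)
          + c.piS s • (c.thetaL Ψ false s - c.tau • c.betaL Ψ false s) := by
      rw [← wOf_smul_form, ← wOf_smul_form]
      exact h
    apply smul_right_injective (Fin k → ℝ) hrpos.ne'
    simp only
    rw [hkey, hkey]
    exact h2

end Stmt3Aux

open CARPop in
/-- Characterization of the set of optimal linear adjustment coefficients:
`(t, b)` minimizes the asymptotic variance `σ²_lin` over all linear coefficient collections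
iff for every stratum `s`,
`√((1−π(s))/π(s))·(t₁ₛ − τ·b₁ₛ) + √(π(s)/(1−π(s)))·(t₀ₛ − τ·b₀ₛ)` agrees with the same
combination of `(θᴸ, βᴸ)`.  In particular `(θᴸ, βᴸ)` is a minimizer. -/
theorem stmt3 {Ω : Type*} [MeasurableSpace Ω] {𝒮 : Type*} [Fintype 𝒮] [MeasurableSpace 𝒮]
    [MeasurableSingletonClass 𝒮] {d k : ℕ}
    (c : CARPop Ω 𝒮 d) (hc : PopAssumptions c)
    (Ψ : 𝒮 → (Fin d → ℝ) → Fin k → ℝ) (hΨ : c.PsiRegular Ψ) :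
    (∀ t b : Bool → 𝒮 → Fin k → ℝ,
      ((∀ t' b' : Bool → 𝒮 → Fin k → ℝ, c.sigmaSqLin Ψ t b ≤ c.sigmaSqLin Ψ t' b') ↔
        (∀ s : 𝒮,
          Real.sqrt ((1 - c.piS s) / c.piS s) • (t true s - c.tau • b true s)
              + Real.sqrt (c.piS s / (1 - c.piS s)) • (t false s - c.tau • b false s)
            = Real.sqrt ((1 - c.piS s) / c.piS s)
                  • (c.thetaL Ψ true s - c.tau • c.betaL Ψ true s)
              + Real.sqrt (c.piS s / (1 - c.piS s))
                  • (c.thetaL Ψ false s - c.tau • c.betaL Ψ false s)))) ∧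
    (∀ t' b' : Bool → 𝒮 → Fin k → ℝ,
      c.sigmaSqLin Ψ (c.thetaL Ψ) (c.betaL Ψ) ≤ c.sigmaSqLin Ψ t' b') := by

  haveI := hc.prob
  classical
  have hp2 : (0:ℝ) < (c.P c.compliers).toReal ^ 2 := by
    have h1 : 0 < (c.P c.compliers).toReal :=
      ENNReal.toReal_pos hc.compliersPos.ne' (measure_ne_top _ _)
    positivity
  have hσ : ∀ t b : Bool → 𝒮 → Fin k → ℝ, c.sigmaSqLin Ψ t b
      = ((∑ s, Fo c Ψ s (wOf c t b s)) + c.sigma2Sq) / (c.P c.compliers).toReal ^ 2 := by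
    intro t b
    rw [CARPop.sigmaSqLin, CARPop.sigmaSq, sigma_decomp hc hΨ t b]
  have hmono : ∀ t b t' b' : Bool → 𝒮 → Fin k → ℝ,
      (c.sigmaSqLin Ψ t b ≤ c.sigmaSqLin Ψ t' b' ↔
        (∑ s, Fo c Ψ s (wOf c t b s)) ≤ ∑ s, Fo c Ψ s (wOf c t' b' s)) := by
    intro t b t' b'
    rw [hσ, hσ, div_le_div_iff_of_pos_right hp2, add_le_add_iff_right]
  have hcoef_nonneg : ∀ s : 𝒮,
      (0:ℝ) ≤ (c.P (c.stratum s)).toReal / (c.piS s * (1 - c.piS s)) := by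
    intro s
    have h1 := ps_pos hc s
    have h2 := pi_pos hc s
    have h3 := pi_lt_one hc s
    apply div_nonneg h1.le
    nlinarith
  have hcoef_pos : ∀ s : 𝒮,
      (0:ℝ) < (c.P (c.stratum s)).toReal / (c.piS s * (1 - c.piS s)) := by
    intro s
    have h1 := ps_pos hc s
    have h2 := pi_pos hc s
    have h3 := pi_lt_one hc s
    apply div_pos h1
    nlinarith
  have hFo_le : ∀ (s : 𝒮) (w : Fin k → ℝ),
      Fo c Ψ s (wOf c (c.thetaL Ψ) (c.betaL Ψ) s) ≤ Fo c Ψ s w := by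
    intro s w
    rw [Fo_diff hc hΨ s w]
    nlinarith [Bq_nonneg hΨ s (w - wOf c (c.thetaL Ψ) (c.betaL Ψ) s), hcoef_nonneg s,
      mul_nonneg (hcoef_nonneg s)
        (Bq_nonneg hΨ s (w - wOf c (c.thetaL Ψ) (c.betaL Ψ) s))]
  have hmin_of : ∀ t b : Bool → 𝒮 → Fin k → ℝ,
      (∀ s : 𝒮, wOf c t b s = wOf c (c.thetaL Ψ) (c.betaL Ψ) s) →
      ∀ t' b' : Bool → 𝒮 → Fin k → ℝ, c.sigmaSqLin Ψ t b ≤ c.sigmaSqLin Ψ t' b' := by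
    intro t b hw t' b'
    rw [hmono]
    calc (∑ s, Fo c Ψ s (wOf c t b s))
        = ∑ s, Fo c Ψ s (wOf c (c.thetaL Ψ) (c.betaL Ψ) s) :=
          Finset.sum_congr rfl fun s _ => by rw [hw s]
      _ ≤ ∑ s, Fo c Ψ s (wOf c t' b' s) := Finset.sum_le_sum fun s _ => hFo_le s _
  refine ⟨fun t b => ⟨fun hmin s => ?_, fun hcond => hmin_of t b
    (fun s => (cond_iff hc s t b).1 (hcond s))⟩,
    hmin_of (c.thetaL Ψ) (c.betaL Ψ) (fun s => rfl)⟩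
  rw [cond_iff hc s t b]
  have hle := (hmono t b (c.thetaL Ψ) (c.betaL Ψ)).1 (hmin (c.thetaL Ψ) (c.betaL Ψ))
  have hsum_le : ∑ s', ((c.P (c.stratum s')).toReal / (c.piS s' * (1 - c.piS s')))
      * Bq c Ψ s' (wOf c t b s' - wOf c (c.thetaL Ψ) (c.betaL Ψ) s')
          (wOf c t b s' - wOf c (c.thetaL Ψ) (c.betaL Ψ) s') ≤ 0 := by
    have h2 : (∑ s', Fo c Ψ s' (wOf c t b s'))
        = (∑ s', Fo c Ψ s' (wOf c (c.thetaL Ψ) (c.betaL Ψ) s'))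
          + ∑ s', ((c.P (c.stratum s')).toReal / (c.piS s' * (1 - c.piS s')))
            * Bq c Ψ s' (wOf c t b s' - wOf c (c.thetaL Ψ) (c.betaL Ψ) s')
                (wOf c t b s' - wOf c (c.thetaL Ψ) (c.betaL Ψ) s') := by
      rw [← Finset.sum_add_distrib]
      exact Finset.sum_congr rfl fun s' _ => Fo_diff hc hΨ s' _
    rw [h2] at hle
    linarith
  have hnn : ∀ s' ∈ Finset.univ (α := 𝒮),
      (0:ℝ) ≤ ((c.P (c.stratum s')).toReal / (c.piS s' * (1 - c.piS s')))
        * Bq c Ψ s' (wOf c t b s' - wOf c (c.thetaL Ψ) (c.betaL Ψ) s')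
            (wOf c t b s' - wOf c (c.thetaL Ψ) (c.betaL Ψ) s') :=
    fun s' _ => mul_nonneg (hcoef_nonneg s') (Bq_nonneg hΨ s' _)
  have hzero := (Finset.sum_eq_zero_iff_of_nonneg hnn).1
    (le_antisymm hsum_le (Finset.sum_nonneg hnn)) s (Finset.mem_univ s)
  have hBq0 : Bq c Ψ s (wOf c t b s - wOf c (c.thetaL Ψ) (c.betaL Ψ) s)
      (wOf c t b s - wOf c (c.thetaL Ψ) (c.betaL Ψ) s) ≤ 0 := by
    rcases mul_eq_zero.1 hzero with h | h
    · exact absurd h (hcoef_pos s).ne'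
    · exact le_of_eq h
  exact sub_eq_zero.1 (Bq_zero hΨ s _ hBq0)
end
end

section
/- For every choice of linear coefficients (t,b), σ²_lin(θ^L, β^L) ≤ σ²_lin(t,b). In particular, taking t = b = 0, the estimator with the optimal linear adjustment is weakly more efficient than the unadjusted (fully saturated) estimator: σ²_lin(θ^L, β^L) ≤ σ²_lin(0,0). -/
open MeasureTheory ProbabilityTheory Finset

noncomputable section

/-! ### Auxiliary development for Statement 4 -/

section AuxStmt4

variable {Ω : Type*} [MeasurableSpace Ω] {𝒮 : Type*} [MeasurableSpace 𝒮] {d k : ℕ}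

/-- A convenient L²-predicate: measurable with integrable square. -/
def M2 (ν : Measure Ω) (f : Ω → ℝ) : Prop :=
  Measurable f ∧ Integrable (fun ω => f ω ^ 2) ν

namespace M2

variable {ν : Measure Ω} {f g : Ω → ℝ}

lemma congr (hf : M2 ν f) (h : ∀ ω, f ω = g ω) : M2 ν g := funext h ▸ hf

lemma of_bound [IsFiniteMeasure ν] (hf : Measurable f) (K : ℝ) (hK : ∀ ω, |f ω| ≤ K) :
    M2 ν f := by
  refine ⟨hf, ?_⟩
  refine Integrable.mono' (integrable_const (K ^ 2)) (hf.pow_const 2).aestronglyMeasurable ?_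
  refine Filter.Eventually.of_forall fun ω => ?_
  have h := hK ω
  rw [Real.norm_eq_abs, abs_pow]
  exact pow_le_pow_left₀ (abs_nonneg _) h 2

lemma const [IsFiniteMeasure ν] (r : ℝ) : M2 ν (fun _ => r) :=
  of_bound measurable_const |r| (fun _ => le_refl _)

lemma integrable [IsFiniteMeasure ν] (hf : M2 ν f) : Integrable f ν := by
  refine Integrable.mono' (g := fun ω => 1 + f ω ^ 2) ((integrable_const 1).add hf.2)
    hf.1.aestronglyMeasurable ?_
  refine Filter.Eventually.of_forall fun ω => ?_
  rw [Real.norm_eq_abs]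
  show |f ω| ≤ 1 + f ω ^ 2
  nlinarith [sq_nonneg (|f ω| - 1), sq_abs (f ω), abs_nonneg (f ω), sq_nonneg (f ω)]

lemma mul (hf : M2 ν f) (hg : M2 ν g) : Integrable (fun ω => f ω * g ω) ν := by
  refine Integrable.mono' (g := fun ω => (f ω ^ 2 + g ω ^ 2) / 2) ((hf.2.add hg.2).div_const 2)
    (hf.1.mul hg.1).aestronglyMeasurable ?_
  refine Filter.Eventually.of_forall fun ω => ?_
  rw [Real.norm_eq_abs, abs_mul]
  show |f ω| * |g ω| ≤ (f ω ^ 2 + g ω ^ 2) / 2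
  nlinarith [sq_nonneg (|f ω| - |g ω|), sq_abs (f ω), sq_abs (g ω)]

lemma add (hf : M2 ν f) (hg : M2 ν g) : M2 ν (fun ω => f ω + g ω) := by
  refine ⟨hf.1.add hg.1, ?_⟩
  have h : (fun ω => (f ω + g ω) ^ 2) = fun ω => f ω ^ 2 + g ω ^ 2 + 2 * (f ω * g ω) :=
    funext fun ω => by ring
  rw [h]
  exact (hf.2.add hg.2).add ((hf.mul hg).const_mul 2)

lemma const_mul (hf : M2 ν f) (r : ℝ) : M2 ν (fun ω => r * f ω) := by
  refine ⟨measurable_const.mul hf.1, ?_⟩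
  have h : (fun ω => (r * f ω) ^ 2) = fun ω => r ^ 2 * f ω ^ 2 := funext fun ω => by ring
  rw [h]
  exact hf.2.const_mul _

lemma mul_const (hf : M2 ν f) (r : ℝ) : M2 ν (fun ω => f ω * r) :=
  (hf.const_mul r).congr fun ω => mul_comm _ _

lemma neg (hf : M2 ν f) : M2 ν (fun ω => -f ω) :=
  (hf.const_mul (-1)).congr fun ω => by ring

lemma sub (hf : M2 ν f) (hg : M2 ν g) : M2 ν (fun ω => f ω - g ω) :=
  (hf.add hg.neg).congr fun ω => by ring

lemma div_const (hf : M2 ν f) (r : ℝ) : M2 ν (fun ω => f ω / r) :=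
  (hf.const_mul r⁻¹).congr fun ω => by rw [inv_mul_eq_div]

lemma sum [IsFiniteMeasure ν] {ι : Type*} (t : Finset ι) (F : ι → Ω → ℝ)
    (hF : ∀ j ∈ t, M2 ν (F j)) : M2 ν (fun ω => ∑ j ∈ t, F j ω) := by
  classical
  induction t using Finset.induction_on with
  | empty => exact (M2.const 0).congr (by simp)
  | @insert a t hnot ih =>
    have h := (hF a (Finset.mem_insert_self a t)).add
      (ih fun j hj => hF j (Finset.mem_insert_of_mem hj))
    exact h.congr fun ω => by rw [Finset.sum_insert hnot]

end M2

namespace CARPop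

variable (c : CARPop Ω 𝒮 d)

lemma stratMS [MeasurableSingletonClass 𝒮] (hS : Measurable c.S) (s : 𝒮) :
    MeasurableSet (c.stratum s) := hS (measurableSet_singleton s)

lemma psPos (hc : c.PopAssumptions) (s : 𝒮) : 0 < (c.P (c.stratum s)).toReal := by
  haveI := hc.prob
  exact ENNReal.toReal_pos (hc.strataPos s).ne' (measure_ne_top _ _)

lemma piPos (hc : c.PopAssumptions) (s : 𝒮) : 0 < c.piS s := by
  obtain ⟨cc, hcc0, -, h⟩ := hc.piRange
  exact lt_trans hcc0 (h s).1

lemma piLt (hc : c.PopAssumptions) (s : 𝒮) : c.piS s < 1 := by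
  obtain ⟨cc, hcc0, -, h⟩ := hc.piRange
  linarith [(h s).2]

lemma ps_mul_cEs (hc : c.PopAssumptions) (s : 𝒮) (f : Ω → ℝ) :
    (c.P (c.stratum s)).toReal * c.cEs s f = ∫ ω in c.stratum s, f ω ∂c.P := by
  rw [cEs, mul_comm, div_mul_cancel₀ _ (c.psPos hc s).ne']

variable (Ψ : 𝒮 → (Fin d → ℝ) → Fin k → ℝ)

lemma daBin (hc : c.PopAssumptions) (a : Bool) (ω : Ω) : c.Da a ω = 0 ∨ c.Da a ω = 1 := by
  cases a
  · simpa [Da] using hc.d0Bin ω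
  · simpa [Da] using hc.d1Bin ω

lemma measDa (hc : c.PopAssumptions) (a : Bool) : Measurable (c.Da a) := by
  cases a
  · simpa [Da] using hc.mD0
  · simpa [Da] using hc.mD1

lemma m2_Da (hc : c.PopAssumptions) (s : 𝒮) (a : Bool) :
    M2 (c.P.restrict (c.stratum s)) (c.Da a) := by
  haveI := hc.prob
  refine M2.of_bound (c.measDa hc a) 1 fun ω => ?_
  rcases c.daBin hc a ω with h | h <;> rw [h] <;> norm_num

lemma m2_Ya (hc : c.PopAssumptions) (s : 𝒮) (a : Bool) :
    M2 (c.P.restrict (c.stratum s)) (c.Ya a) := by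
  haveI := hc.prob
  have hmeas : Measurable (c.Ya a) :=
    (hc.mY1.mul (c.measDa hc a)).add (hc.mY0.mul (measurable_const.sub (c.measDa hc a)))
  refine ⟨hmeas, ?_⟩
  have hint : Integrable (fun ω => c.Y1 ω ^ 2 + c.Y0 ω ^ 2) (c.P.restrict (c.stratum s)) :=
    Integrable.add (hc.intY1sq.restrict) (hc.intY0sq.restrict)
  refine Integrable.mono' hint ((hmeas.pow_const 2).aestronglyMeasurable) ?_
  refine Filter.Eventually.of_forall fun ω => ?_
  rw [Real.norm_eq_abs, abs_of_nonneg (sq_nonneg _)]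
  rcases c.daBin hc a ω with h | h <;> simp [Ya, h] <;> nlinarith [sq_nonneg (c.Y1 ω), sq_nonneg (c.Y0 ω)]

lemma m2_psit (hc : c.PopAssumptions) (hΨ : c.PsiRegular Ψ) (s : 𝒮) (j : Fin k) :
    M2 (c.P.restrict (c.stratum s)) (fun ω => c.psiTilt Ψ s ω j) := by
  haveI := hc.prob
  have hmeas : Measurable (fun ω => c.psiTilt Ψ s ω j) :=
    ((measurable_pi_apply j).comp ((hΨ.1 s).comp hc.mX)).sub measurable_const
  refine ⟨hmeas, ?_⟩
  by_contra hni
  obtain ⟨c', C', hc'0, -, hev⟩ := hΨ.2.2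
  have h0 : c.gram Ψ s j j = 0 := by
    have hni' : ¬ Integrable (fun ω => c.psiTilt Ψ s ω j * c.psiTilt Ψ s ω j)
        (c.P.restrict (c.stratum s)) := by
      have h : (fun ω => c.psiTilt Ψ s ω j * c.psiTilt Ψ s ω j)
          = fun ω => c.psiTilt Ψ s ω j ^ 2 := funext fun ω => (pow_two _).symm
      rw [h]; exact hni
    show c.cEs s (fun ω => c.psiTilt Ψ s ω j * c.psiTilt Ψ s ω j) = 0
    rw [cEs, integral_undef hni', zero_div]
  have h2 : (c.gram Ψ s).mulVec ((Pi.single j 1 : Fin k → ℝ)) = fun i => c.gram Ψ s i j := by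
    funext i
    simp [Matrix.mulVec, dotProduct, Pi.single_apply, mul_ite]
  have h := (hev s ((Pi.single j 1 : Fin k → ℝ))).1
  rw [h2] at h
  have h3 : ∑ i, (Pi.single j 1 : Fin k → ℝ) i ^ 2 = 1 := by
    simp [Pi.single_apply, sq, ite_mul]
  have h4 : ∑ i, (Pi.single j 1 : Fin k → ℝ) i * c.gram Ψ s i j = c.gram Ψ s j j := by
    simp [Pi.single_apply, ite_mul]
  rw [h3, h4, h0, mul_one] at h
  linarith

lemma m2_Psi (hc : c.PopAssumptions) (hΨ : c.PsiRegular Ψ) (s : 𝒮) (j : Fin k) :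
    M2 (c.P.restrict (c.stratum s)) (fun ω => Ψ s (c.X ω) j) := by
  haveI := hc.prob
  exact ((c.m2_psit Ψ hc hΨ s j).add
      (M2.const (c.cEs s (fun ω' => Ψ s (c.X ω') j)))).congr fun ω => by
    show Ψ s (c.X ω) j - c.cEs s (fun ω' => Ψ s (c.X ω') j)
        + c.cEs s (fun ω' => Ψ s (c.X ω') j) = Ψ s (c.X ω) j
    ring

lemma int_psit_zero (hc : c.PopAssumptions) (hΨ : c.PsiRegular Ψ) (s : 𝒮) (j : Fin k) :
    ∫ ω in c.stratum s, c.psiTilt Ψ s ω j ∂c.P = 0 := by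
  haveI := hc.prob
  have hint : Integrable (fun ω => Ψ s (c.X ω) j) (c.P.restrict (c.stratum s)) :=
    (c.m2_Psi Ψ hc hΨ s j).integrable
  have h : (fun ω => c.psiTilt Ψ s ω j)
      = fun ω => Ψ s (c.X ω) j - c.cEs s (fun ω' => Ψ s (c.X ω') j) := rfl
  have hps : (c.P (c.stratum s)).toReal ≠ 0 := (c.psPos hc s).ne'
  rw [h, integral_sub hint (integrable_const _), integral_const,
    measureReal_restrict_apply_univ, measureReal_def, smul_eq_mul, cEs]
  field_simp
  simp

lemma gram_det (hΨ : c.PsiRegular Ψ) (s : 𝒮) : IsUnit (c.gram Ψ s).det := by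
  obtain ⟨c', C', hc'0, -, hev⟩ := hΨ.2.2
  rw [isUnit_iff_ne_zero]
  intro hdet
  obtain ⟨v, hv0, hveq⟩ := Matrix.exists_mulVec_eq_zero_iff.2 hdet
  have h := (hev s v).1
  rw [hveq] at h
  simp only [Pi.zero_apply, mul_zero, Finset.sum_const_zero] at h
  have hpos : 0 < ∑ j, v j ^ 2 := by
    obtain ⟨j, hj⟩ := Function.ne_iff.1 hv0
    have habs : 0 < |v j| := abs_pos.mpr hj
    refine Finset.sum_pos' (fun i _ => sq_nonneg _) ⟨j, Finset.mem_univ j, ?_⟩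
    nlinarith [sq_abs (v j)]
  nlinarith

lemma mulVec_thetaL (hΨ : c.PsiRegular Ψ) (s : 𝒮) (a : Bool) :
    (c.gram Ψ s).mulVec (c.thetaL Ψ a s)
      = fun j => c.cEs s (fun ω => c.psiTilt Ψ s ω j * c.Ya a ω) := by
  show (c.gram Ψ s).mulVec ((c.gram Ψ s)⁻¹.mulVec _) = _
  rw [Matrix.mulVec_mulVec, Matrix.mul_nonsing_inv _ (c.gram_det Ψ hΨ s), Matrix.one_mulVec]

lemma mulVec_betaL (hΨ : c.PsiRegular Ψ) (s : 𝒮) (a : Bool) :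
    (c.gram Ψ s).mulVec (c.betaL Ψ a s)
      = fun j => c.cEs s (fun ω => c.psiTilt Ψ s ω j * c.Da a ω) := by
  show (c.gram Ψ s).mulVec ((c.gram Ψ s)⁻¹.mulVec _) = _
  rw [Matrix.mulVec_mulVec, Matrix.mul_nonsing_inv _ (c.gram_det Ψ hΨ s), Matrix.one_mulVec]

/-- Centered outcome term within stratum `s`: `Ỹ(a) − τ·D̃(a)` (using stratum-`s` centering). -/
def strY (s : 𝒮) (a : Bool) : Ω → ℝ := fun ω =>
  (c.Ya a ω - c.cEs s (c.Ya a)) - c.tau * (c.Da a ω - c.cEs s (c.Da a))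

/-- Linear combination of centered regressors. -/
def gf (s : 𝒮) (v : Fin k → ℝ) : Ω → ℝ := fun ω => ∑ j, c.psiTilt Ψ s ω j * v j

/-- The effective coefficient vector of the linear adjustment. -/
def vco (s : 𝒮) (t b : Bool → 𝒮 → Fin k → ℝ) : Fin k → ℝ := fun j =>
  ((1 - c.piS s) / c.piS s) * (t true s j - c.tau * b true s j)
    + (t false s j - c.tau * b false s j)

/-- Explicit per-stratum form of the `σ₁²` integrand. -/
def q1 (s : 𝒮) (t b : Bool → 𝒮 → Fin k → ℝ) : Ω → ℝ := fun ω =>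
  c.piS s * (c.strY s true ω / c.piS s - c.gf Ψ s (c.vco s t b) ω) ^ 2

/-- Explicit per-stratum form of the `σ₀²` integrand. -/
def q0 (s : 𝒮) (t b : Bool → 𝒮 → Fin k → ℝ) : Ω → ℝ := fun ω =>
  (1 - c.piS s) * ((-c.strY s false ω) / (1 - c.piS s)
    + c.piS s / (1 - c.piS s) * c.gf Ψ s (c.vco s t b) ω) ^ 2

/-- The cross term in the variance comparison. -/
def Cf (s : 𝒮) : Ω → ℝ := fun ω =>
  -c.strY s true ω - c.piS s / (1 - c.piS s) * c.strY s false ω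
    + c.piS s / (1 - c.piS s) * c.gf Ψ s (c.vco s (c.thetaL Ψ) (c.betaL Ψ)) ω

lemma m2_strY (hc : c.PopAssumptions) (s : 𝒮) (a : Bool) :
    M2 (c.P.restrict (c.stratum s)) (c.strY s a) := by
  haveI := hc.prob
  exact ((c.m2_Ya hc s a).sub (M2.const _)).sub
    (((c.m2_Da hc s a).sub (M2.const _)).const_mul _)

lemma m2_gf (hc : c.PopAssumptions) (hΨ : c.PsiRegular Ψ) (s : 𝒮) (v : Fin k → ℝ) :
    M2 (c.P.restrict (c.stratum s)) (c.gf Ψ s v) := by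
  haveI := hc.prob
  exact M2.sum Finset.univ _ (fun j _ => (c.m2_psit Ψ hc hΨ s j).mul_const (v j))

lemma m2_q1inner (hc : c.PopAssumptions) (hΨ : c.PsiRegular Ψ) (s : 𝒮)
    (t b : Bool → 𝒮 → Fin k → ℝ) :
    M2 (c.P.restrict (c.stratum s))
      (fun ω => c.strY s true ω / c.piS s - c.gf Ψ s (c.vco s t b) ω) :=
  ((c.m2_strY hc s true).div_const _).sub (c.m2_gf Ψ hc hΨ s _)

lemma m2_q0inner (hc : c.PopAssumptions) (hΨ : c.PsiRegular Ψ) (s : 𝒮)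
    (t b : Bool → 𝒮 → Fin k → ℝ) :
    M2 (c.P.restrict (c.stratum s))
      (fun ω => (-c.strY s false ω) / (1 - c.piS s)
        + c.piS s / (1 - c.piS s) * c.gf Ψ s (c.vco s t b) ω) :=
  (((c.m2_strY hc s false).neg).div_const _).add ((c.m2_gf Ψ hc hΨ s _).const_mul _)

lemma int_q1 (hc : c.PopAssumptions) (hΨ : c.PsiRegular Ψ) (s : 𝒮)
    (t b : Bool → 𝒮 → Fin k → ℝ) :
    Integrable (c.q1 Ψ s t b) (c.P.restrict (c.stratum s)) :=
  ((c.m2_q1inner Ψ hc hΨ s t b).2).const_mul _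

lemma int_q0 (hc : c.PopAssumptions) (hΨ : c.PsiRegular Ψ) (s : 𝒮)
    (t b : Bool → 𝒮 → Fin k → ℝ) :
    Integrable (c.q0 Ψ s t b) (c.P.restrict (c.stratum s)) :=
  ((c.m2_q0inner Ψ hc hΨ s t b).2).const_mul _

lemma m2_Cf (hc : c.PopAssumptions) (hΨ : c.PsiRegular Ψ) (s : 𝒮) :
    M2 (c.P.restrict (c.stratum s)) (c.Cf Ψ s) :=
  (((c.m2_strY hc s true).neg).sub ((c.m2_strY hc s false).const_mul _)).add
    ((c.m2_gf Ψ hc hΨ s _).const_mul _)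

lemma scalar_id (π a b x y : ℝ) (h0 : π ≠ 0) (h1 : 1 - π ≠ 0) :
    π * (a / π - (x + y)) ^ 2 + (1 - π) * ((-b) / (1 - π) + π / (1 - π) * (x + y)) ^ 2
      = (π * (a / π - x) ^ 2 + (1 - π) * ((-b) / (1 - π) + π / (1 - π) * x) ^ 2)
        + (π / (1 - π) * y ^ 2 + 2 * ((-a - π / (1 - π) * b + π / (1 - π) * x) * y)) := by
  field_simp
  ring

lemma tilt_lin [MeasurableSingletonClass 𝒮] (hc : c.PopAssumptions) (hΨ : c.PsiRegular Ψ)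
    (s : 𝒮) (t : Bool → 𝒮 → Fin k → ℝ) (a : Bool) (ω : Ω) (hω : ω ∈ c.stratum s) :
    c.tilt (c.wm (linWM Ψ t) a) ω = ∑ j, c.psiTilt Ψ s ω j * t a s j := by
  haveI := hc.prob
  have hs : c.S ω = s := hω
  have hcE : c.cEs s (c.wm (linWM Ψ t) a)
      = ∑ j, c.cEs s (fun ω' => Ψ s (c.X ω') j) * t a s j := by
    rw [cEs, setIntegral_congr_fun (c.stratMS hc.mS s)
      (g := fun ω' => ∑ j, Ψ s (c.X ω') j * t a s j)
      (fun ω' hω' => by simp [wm, linWM, show c.S ω' = s from hω'])]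
    rw [integral_finset_sum _ fun j _ => ((c.m2_Psi Ψ hc hΨ s j).integrable.mul_const _)]
    rw [Finset.sum_div]
    refine Finset.sum_congr rfl fun j _ => ?_
    rw [integral_mul_const, mul_div_right_comm, cEs]
  simp only [tilt, cES, hs, hcE, wm, linWM]
  rw [← Finset.sum_sub_distrib]
  refine Finset.sum_congr rfl fun j _ => ?_
  simp only [psiTilt, hs]
  ring

lemma xi1_eq [MeasurableSingletonClass 𝒮] (hc : c.PopAssumptions) (hΨ : c.PsiRegular Ψ)
    (s : 𝒮) (t b : Bool → 𝒮 → Fin k → ℝ) (ω : Ω) (hω : ω ∈ c.stratum s) :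
    c.Xi1 (linWM Ψ t) (linWM Ψ b) ω
      = c.strY s true ω / c.piS s - c.gf Ψ s (c.vco s t b) ω := by
  have hs : c.S ω = s := hω
  have hπ : c.piS s ≠ 0 := (c.piPos hc s).ne'
  have h1 := c.tilt_lin Ψ hc hΨ s t true ω hω
  have h2 := c.tilt_lin Ψ hc hΨ s t false ω hω
  have h3 := c.tilt_lin Ψ hc hΨ s b true ω hω
  have h4 := c.tilt_lin Ψ hc hΨ s b false ω hω
  have hg : c.gf Ψ s (c.vco s t b) ω
      = ((1 - c.piS s) / c.piS s) * ((∑ j, c.psiTilt Ψ s ω j * t true s j)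
          - c.tau * (∑ j, c.psiTilt Ψ s ω j * b true s j))
        + ((∑ j, c.psiTilt Ψ s ω j * t false s j)
          - c.tau * (∑ j, c.psiTilt Ψ s ω j * b false s j)) := by
    simp only [gf, vco, Finset.mul_sum, ← Finset.sum_sub_distrib, ← Finset.sum_add_distrib]
    exact Finset.sum_congr rfl fun j _ => by ring
  simp only [Xi1]
  rw [h1, h2, h3, h4, hg]
  simp only [tilt, cES, hs, strY]
  rw [show c.W = c.Ya true from rfl]
  field_simp
  ring

lemma xi0_eq [MeasurableSingletonClass 𝒮] (hc : c.PopAssumptions) (hΨ : c.PsiRegular Ψ)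
    (s : 𝒮) (t b : Bool → 𝒮 → Fin k → ℝ) (ω : Ω) (hω : ω ∈ c.stratum s) :
    c.Xi0 (linWM Ψ t) (linWM Ψ b) ω
      = (-c.strY s false ω) / (1 - c.piS s)
        + c.piS s / (1 - c.piS s) * c.gf Ψ s (c.vco s t b) ω := by
  have hs : c.S ω = s := hω
  have hπ : c.piS s ≠ 0 := (c.piPos hc s).ne'
  have hπ1 : (1:ℝ) - c.piS s ≠ 0 := (by linarith [c.piLt hc s] : (0:ℝ) < 1 - c.piS s).ne'
  have h1 := c.tilt_lin Ψ hc hΨ s t true ω hω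
  have h2 := c.tilt_lin Ψ hc hΨ s t false ω hω
  have h3 := c.tilt_lin Ψ hc hΨ s b true ω hω
  have h4 := c.tilt_lin Ψ hc hΨ s b false ω hω
  have hg : c.gf Ψ s (c.vco s t b) ω
      = ((1 - c.piS s) / c.piS s) * ((∑ j, c.psiTilt Ψ s ω j * t true s j)
          - c.tau * (∑ j, c.psiTilt Ψ s ω j * b true s j))
        + ((∑ j, c.psiTilt Ψ s ω j * t false s j)
          - c.tau * (∑ j, c.psiTilt Ψ s ω j * b false s j)) := by
    simp only [gf, vco, Finset.mul_sum, ← Finset.sum_sub_distrib, ← Finset.sum_add_distrib]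
    exact Finset.sum_congr rfl fun j _ => by ring
  simp only [Xi0]
  rw [h1, h2, h3, h4, hg]
  simp only [tilt, cES, hs, strY]
  rw [show c.Z = c.Ya false from rfl]
  field_simp
  ring

lemma int_strY_psit [MeasurableSingletonClass 𝒮] (hc : c.PopAssumptions) (hΨ : c.PsiRegular Ψ)
    (s : 𝒮) (a : Bool) (j : Fin k) :
    ∫ ω in c.stratum s, c.strY s a ω * c.psiTilt Ψ s ω j ∂c.P
      = (c.P (c.stratum s)).toReal
          * ((c.gram Ψ s).mulVec (c.thetaL Ψ a s) j
            - c.tau * (c.gram Ψ s).mulVec (c.betaL Ψ a s) j) := by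
  haveI := hc.prob
  have hY : ∫ ω in c.stratum s, c.Ya a ω * c.psiTilt Ψ s ω j ∂c.P
      = (c.P (c.stratum s)).toReal * (c.gram Ψ s).mulVec (c.thetaL Ψ a s) j := by
    rw [show (c.gram Ψ s).mulVec (c.thetaL Ψ a s) j
        = c.cEs s (fun ω => c.psiTilt Ψ s ω j * c.Ya a ω) from congrFun (c.mulVec_thetaL Ψ hΨ s a) j]
    rw [c.ps_mul_cEs hc s]
    exact setIntegral_congr_fun (c.stratMS hc.mS s) fun ω _ => mul_comm _ _
  have hD : ∫ ω in c.stratum s, c.Da a ω * c.psiTilt Ψ s ω j ∂c.P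
      = (c.P (c.stratum s)).toReal * (c.gram Ψ s).mulVec (c.betaL Ψ a s) j := by
    rw [show (c.gram Ψ s).mulVec (c.betaL Ψ a s) j
        = c.cEs s (fun ω => c.psiTilt Ψ s ω j * c.Da a ω) from congrFun (c.mulVec_betaL Ψ hΨ s a) j]
    rw [c.ps_mul_cEs hc s]
    exact setIntegral_congr_fun (c.stratMS hc.mS s) fun ω _ => mul_comm _ _
  have hfun : (fun ω => c.strY s a ω * c.psiTilt Ψ s ω j)
      = fun ω => (c.Ya a ω * c.psiTilt Ψ s ω j - c.tau * (c.Da a ω * c.psiTilt Ψ s ω j))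
          - (c.cEs s (c.Ya a) - c.tau * c.cEs s (c.Da a)) * c.psiTilt Ψ s ω j :=
    funext fun ω => by simp only [strY]; ring
  have hiY : Integrable (fun ω => c.Ya a ω * c.psiTilt Ψ s ω j)
      (c.P.restrict (c.stratum s)) := (c.m2_Ya hc s a).mul (c.m2_psit Ψ hc hΨ s j)
  have hiD : Integrable (fun ω => c.tau * (c.Da a ω * c.psiTilt Ψ s ω j))
      (c.P.restrict (c.stratum s)) :=
    ((c.m2_Da hc s a).mul (c.m2_psit Ψ hc hΨ s j)).const_mul _
  have hi1 : Integrable (fun ω => c.Ya a ω * c.psiTilt Ψ s ω j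
      - c.tau * (c.Da a ω * c.psiTilt Ψ s ω j)) (c.P.restrict (c.stratum s)) := hiY.sub hiD
  have hi2 : Integrable (fun ω => (c.cEs s (c.Ya a) - c.tau * c.cEs s (c.Da a))
      * c.psiTilt Ψ s ω j) (c.P.restrict (c.stratum s)) :=
    (c.m2_psit Ψ hc hΨ s j).integrable.const_mul _
  rw [hfun, integral_sub hi1 hi2, integral_sub hiY hiD]
  rw [integral_const_mul, integral_const_mul, c.int_psit_zero Ψ hc hΨ s j, mul_zero, sub_zero,
    hY, hD]
  ring

lemma int_gf_psit (hc : c.PopAssumptions) (hΨ : c.PsiRegular Ψ) (s : 𝒮) (v : Fin k → ℝ)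
    (j : Fin k) :
    ∫ ω in c.stratum s, c.gf Ψ s v ω * c.psiTilt Ψ s ω j ∂c.P
      = (c.P (c.stratum s)).toReal * (c.gram Ψ s).mulVec v j := by
  haveI := hc.prob
  have hfun : (fun ω => c.gf Ψ s v ω * c.psiTilt Ψ s ω j)
      = fun ω => ∑ i, (c.psiTilt Ψ s ω j * c.psiTilt Ψ s ω i) * v i := funext fun ω => by
    simp only [gf, Finset.sum_mul]
    exact Finset.sum_congr rfl fun i _ => by ring
  rw [hfun, integral_finset_sum _ fun i _ =>
    (((c.m2_psit Ψ hc hΨ s j).mul (c.m2_psit Ψ hc hΨ s i)).mul_const _)]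
  show _ = (c.P (c.stratum s)).toReal * ∑ i, c.gram Ψ s j i * v i
  rw [Finset.mul_sum]
  refine Finset.sum_congr rfl fun i _ => ?_
  rw [integral_mul_const,
    show c.gram Ψ s j i = c.cEs s (fun ω => c.psiTilt Ψ s ω j * c.psiTilt Ψ s ω i) from rfl,
    ← mul_assoc, c.ps_mul_cEs hc s]

lemma vco_mulVec (s : 𝒮) (t b : Bool → 𝒮 → Fin k → ℝ) (j : Fin k) :
    (c.gram Ψ s).mulVec (c.vco s t b) j
      = ((1 - c.piS s) / c.piS s) * ((c.gram Ψ s).mulVec (t true s) j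
          - c.tau * (c.gram Ψ s).mulVec (b true s) j)
        + ((c.gram Ψ s).mulVec (t false s) j - c.tau * (c.gram Ψ s).mulVec (b false s) j) := by
  simp only [Matrix.mulVec, dotProduct, vco, Finset.mul_sum, ← Finset.sum_sub_distrib,
    ← Finset.sum_add_distrib]
  exact Finset.sum_congr rfl fun i _ => by ring

lemma normalEq [MeasurableSingletonClass 𝒮] (hc : c.PopAssumptions) (hΨ : c.PsiRegular Ψ)
    (s : 𝒮) (j : Fin k) :
    ∫ ω in c.stratum s, c.Cf Ψ s ω * c.psiTilt Ψ s ω j ∂c.P = 0 := by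
  haveI := hc.prob
  have hπ : c.piS s ≠ 0 := (c.piPos hc s).ne'
  have hπ1 : (1:ℝ) - c.piS s ≠ 0 := (by linarith [c.piLt hc s] : (0:ℝ) < 1 - c.piS s).ne'
  have hfun : (fun ω => c.Cf Ψ s ω * c.psiTilt Ψ s ω j)
      = fun ω => c.piS s / (1 - c.piS s)
            * (c.gf Ψ s (c.vco s (c.thetaL Ψ) (c.betaL Ψ)) ω * c.psiTilt Ψ s ω j)
          - (c.strY s true ω * c.psiTilt Ψ s ω j
            + c.piS s / (1 - c.piS s) * (c.strY s false ω * c.psiTilt Ψ s ω j)) :=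
    funext fun ω => by simp only [Cf]; ring
  have hig : Integrable (fun ω => c.piS s / (1 - c.piS s)
      * (c.gf Ψ s (c.vco s (c.thetaL Ψ) (c.betaL Ψ)) ω * c.psiTilt Ψ s ω j))
      (c.P.restrict (c.stratum s)) :=
    ((c.m2_gf Ψ hc hΨ s _).mul (c.m2_psit Ψ hc hΨ s j)).const_mul _
  have hit : Integrable (fun ω => c.strY s true ω * c.psiTilt Ψ s ω j)
      (c.P.restrict (c.stratum s)) := (c.m2_strY hc s true).mul (c.m2_psit Ψ hc hΨ s j)
  have hif : Integrable (fun ω => c.piS s / (1 - c.piS s)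
      * (c.strY s false ω * c.psiTilt Ψ s ω j)) (c.P.restrict (c.stratum s)) :=
    ((c.m2_strY hc s false).mul (c.m2_psit Ψ hc hΨ s j)).const_mul _
  have hitf : Integrable (fun ω => c.strY s true ω * c.psiTilt Ψ s ω j
      + c.piS s / (1 - c.piS s) * (c.strY s false ω * c.psiTilt Ψ s ω j))
      (c.P.restrict (c.stratum s)) := hit.add hif
  rw [hfun, integral_sub hig hitf, integral_add hit hif]
  rw [integral_const_mul, integral_const_mul]
  rw [c.int_gf_psit Ψ hc hΨ s _ j, c.int_strY_psit Ψ hc hΨ s true j,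
    c.int_strY_psit Ψ hc hΨ s false j, c.vco_mulVec Ψ s _ _ j]
  field_simp
  ring

lemma key [MeasurableSingletonClass 𝒮] (hc : c.PopAssumptions) (hΨ : c.PsiRegular Ψ)
    (s : 𝒮) (t b : Bool → 𝒮 → Fin k → ℝ) :
    ∫ ω in c.stratum s, (c.q1 Ψ s (c.thetaL Ψ) (c.betaL Ψ) ω
        + c.q0 Ψ s (c.thetaL Ψ) (c.betaL Ψ) ω) ∂c.P
      ≤ ∫ ω in c.stratum s, (c.q1 Ψ s t b ω + c.q0 Ψ s t b ω) ∂c.P := by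
  haveI := hc.prob
  have hπ : c.piS s ≠ 0 := (c.piPos hc s).ne'
  have hπ1 : (1:ℝ) - c.piS s ≠ 0 := (by linarith [c.piLt hc s] : (0:ℝ) < 1 - c.piS s).ne'
  have hδ := c.m2_gf Ψ hc hΨ s (fun i => c.vco s t b i - c.vco s (c.thetaL Ψ) (c.betaL Ψ) i)
  have hC := c.m2_Cf Ψ hc hΨ s
  have hpt : (fun ω => c.q1 Ψ s t b ω + c.q0 Ψ s t b ω)
      = fun ω => (c.q1 Ψ s (c.thetaL Ψ) (c.betaL Ψ) ω + c.q0 Ψ s (c.thetaL Ψ) (c.betaL Ψ) ω)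
          + (c.piS s / (1 - c.piS s)
              * c.gf Ψ s (fun i => c.vco s t b i - c.vco s (c.thetaL Ψ) (c.betaL Ψ) i) ω ^ 2
            + 2 * (c.Cf Ψ s ω
              * c.gf Ψ s (fun i => c.vco s t b i - c.vco s (c.thetaL Ψ) (c.betaL Ψ) i) ω)) := by
    funext ω
    have hsplit : c.gf Ψ s (c.vco s t b) ω
        = c.gf Ψ s (c.vco s (c.thetaL Ψ) (c.betaL Ψ)) ω
          + c.gf Ψ s (fun i => c.vco s t b i - c.vco s (c.thetaL Ψ) (c.betaL Ψ) i) ω := by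
      simp only [gf, ← Finset.sum_add_distrib]
      exact Finset.sum_congr rfl fun i _ => by ring
    simp only [q1, q0, Cf]
    rw [hsplit]
    exact scalar_id (c.piS s) _ _ _ _ hπ hπ1
  have hCδ : ∫ ω in c.stratum s, c.Cf Ψ s ω
      * c.gf Ψ s (fun i => c.vco s t b i - c.vco s (c.thetaL Ψ) (c.betaL Ψ) i) ω ∂c.P = 0 := by
    have hfun : (fun ω => c.Cf Ψ s ω
        * c.gf Ψ s (fun i => c.vco s t b i - c.vco s (c.thetaL Ψ) (c.betaL Ψ) i) ω)
        = fun ω => ∑ i, (c.Cf Ψ s ω * c.psiTilt Ψ s ω i)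
            * (c.vco s t b i - c.vco s (c.thetaL Ψ) (c.betaL Ψ) i) := funext fun ω => by
      simp only [gf, Finset.mul_sum]
      exact Finset.sum_congr rfl fun i _ => by ring
    rw [hfun, integral_finset_sum _ fun i _ =>
      ((hC.mul (c.m2_psit Ψ hc hΨ s i)).mul_const _)]
    refine Finset.sum_eq_zero fun i _ => ?_
    rw [integral_mul_const, c.normalEq Ψ hc hΨ s i, zero_mul]
  have hiq : Integrable (fun ω => c.q1 Ψ s (c.thetaL Ψ) (c.betaL Ψ) ω
      + c.q0 Ψ s (c.thetaL Ψ) (c.betaL Ψ) ω) (c.P.restrict (c.stratum s)) :=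
    (c.int_q1 Ψ hc hΨ s _ _).add (c.int_q0 Ψ hc hΨ s _ _)
  have hia : Integrable (fun ω => c.piS s / (1 - c.piS s)
      * c.gf Ψ s (fun i => c.vco s t b i - c.vco s (c.thetaL Ψ) (c.betaL Ψ) i) ω ^ 2)
      (c.P.restrict (c.stratum s)) := hδ.2.const_mul _
  have hib : Integrable (fun ω => 2 * (c.Cf Ψ s ω
      * c.gf Ψ s (fun i => c.vco s t b i - c.vco s (c.thetaL Ψ) (c.betaL Ψ) i) ω))
      (c.P.restrict (c.stratum s)) := (hC.mul hδ).const_mul 2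
  have hiab : Integrable (fun ω => c.piS s / (1 - c.piS s)
      * c.gf Ψ s (fun i => c.vco s t b i - c.vco s (c.thetaL Ψ) (c.betaL Ψ) i) ω ^ 2
      + 2 * (c.Cf Ψ s ω
        * c.gf Ψ s (fun i => c.vco s t b i - c.vco s (c.thetaL Ψ) (c.betaL Ψ) i) ω))
      (c.P.restrict (c.stratum s)) := hia.add hib
  rw [hpt, integral_add hiq hiab, integral_add hia hib]
  rw [integral_const_mul, integral_const_mul, hCδ, mul_zero, add_zero]
  have h0 : 0 ≤ c.piS s / (1 - c.piS s)
      * ∫ ω in c.stratum s, c.gf Ψ s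
          (fun i => c.vco s t b i - c.vco s (c.thetaL Ψ) (c.betaL Ψ) i) ω ^ 2 ∂c.P :=
    mul_nonneg (div_nonneg (c.piPos hc s).le (by linarith [c.piLt hc s]))
      (integral_nonneg fun ω => sq_nonneg _)
  linarith

lemma sumRepr [Fintype 𝒮] [MeasurableSingletonClass 𝒮] (hc : c.PopAssumptions)
    (hΨ : c.PsiRegular Ψ) (t b : Bool → 𝒮 → Fin k → ℝ) :
    c.sigma1Sq (linWM Ψ t) (linWM Ψ b) + c.sigma0Sq (linWM Ψ t) (linWM Ψ b)
      = ∑ s : 𝒮, ∫ ω in c.stratum s, (c.q1 Ψ s t b ω + c.q0 Ψ s t b ω) ∂c.P := by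
  haveI := hc.prob
  have hms : ∀ s : 𝒮, MeasurableSet (c.stratum s) := fun s => c.stratMS hc.mS s
  have hdisj : Set.Pairwise ((Finset.univ : Finset 𝒮) : Set 𝒮) (Function.onFun Disjoint c.stratum) := by
    intro s1 _ s2 _ hne
    refine Set.disjoint_left.mpr fun ω h1 h2 => hne ?_
    exact (show c.S ω = s1 from h1).symm.trans h2
  have hcov : (⋃ s ∈ (Finset.univ : Finset 𝒮), c.stratum s) = Set.univ := by
    ext ω
    constructor
    · intro _; trivial
    · intro _
      exact Set.mem_biUnion (Finset.mem_univ (c.S ω)) rfl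
  have hEq1 : ∀ s : 𝒮, Set.EqOn (fun ω => c.piS (c.S ω) * c.Xi1 (linWM Ψ t) (linWM Ψ b) ω ^ 2)
      (c.q1 Ψ s t b) (c.stratum s) := fun s ω hω => by
    have hs : c.S ω = s := hω
    show c.piS (c.S ω) * c.Xi1 (linWM Ψ t) (linWM Ψ b) ω ^ 2 = _
    rw [hs, c.xi1_eq Ψ hc hΨ s t b ω hω]
    rfl
  have hEq0 : ∀ s : 𝒮, Set.EqOn
      (fun ω => (1 - c.piS (c.S ω)) * c.Xi0 (linWM Ψ t) (linWM Ψ b) ω ^ 2)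
      (c.q0 Ψ s t b) (c.stratum s) := fun s ω hω => by
    have hs : c.S ω = s := hω
    show (1 - c.piS (c.S ω)) * c.Xi0 (linWM Ψ t) (linWM Ψ b) ω ^ 2 = _
    rw [hs, c.xi0_eq Ψ hc hΨ s t b ω hω]
    rfl
  have hIOn1 : ∀ s : 𝒮, IntegrableOn
      (fun ω => c.piS (c.S ω) * c.Xi1 (linWM Ψ t) (linWM Ψ b) ω ^ 2) (c.stratum s) c.P :=
    fun s => IntegrableOn.congr_fun (c.int_q1 Ψ hc hΨ s t b) (hEq1 s).symm (hms s)
  have hIOn0 : ∀ s : 𝒮, IntegrableOn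
      (fun ω => (1 - c.piS (c.S ω)) * c.Xi0 (linWM Ψ t) (linWM Ψ b) ω ^ 2) (c.stratum s) c.P :=
    fun s => IntegrableOn.congr_fun (c.int_q0 Ψ hc hΨ s t b) (hEq0 s).symm (hms s)
  have h1 : c.sigma1Sq (linWM Ψ t) (linWM Ψ b)
      = ∑ s : 𝒮, ∫ ω in c.stratum s, c.q1 Ψ s t b ω ∂c.P := by
    show (∫ ω, c.piS (c.S ω) * c.Xi1 (linWM Ψ t) (linWM Ψ b) ω ^ 2 ∂c.P) = _
    rw [← setIntegral_univ, ← hcov,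
      integral_biUnion_finset Finset.univ (fun s _ => hms s) hdisj (fun s _ => hIOn1 s)]
    exact Finset.sum_congr rfl fun s _ => setIntegral_congr_fun (hms s) (hEq1 s)
  have h0 : c.sigma0Sq (linWM Ψ t) (linWM Ψ b)
      = ∑ s : 𝒮, ∫ ω in c.stratum s, c.q0 Ψ s t b ω ∂c.P := by
    show (∫ ω, (1 - c.piS (c.S ω)) * c.Xi0 (linWM Ψ t) (linWM Ψ b) ω ^ 2 ∂c.P) = _
    rw [← setIntegral_univ, ← hcov,
      integral_biUnion_finset Finset.univ (fun s _ => hms s) hdisj (fun s _ => hIOn0 s)]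
    exact Finset.sum_congr rfl fun s _ => setIntegral_congr_fun (hms s) (hEq0 s)
  rw [h1, h0, ← Finset.sum_add_distrib]
  exact Finset.sum_congr rfl fun s _ =>
    (integral_add (c.int_q1 Ψ hc hΨ s t b) (c.int_q0 Ψ hc hΨ s t b)).symm

end CARPop

end AuxStmt4

open CARPop in
/-- The optimal linear adjustment `(θᴸ, βᴸ)` yields a weakly smaller
asymptotic variance than any other linear adjustment coefficients `(t, b)`; in particular,
taking `t = b = 0`, it is weakly more efficient than the unadjusted (fully saturated)
estimator. -/
theorem stmt4 {Ω : Type*} [MeasurableSpace Ω] {𝒮 : Type*} [Fintype 𝒮] [MeasurableSpace 𝒮]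
    [MeasurableSingletonClass 𝒮] {d k : ℕ}
    (c : CARPop Ω 𝒮 d) (hc : PopAssumptions c)
    (Ψ : 𝒮 → (Fin d → ℝ) → Fin k → ℝ) (hΨ : c.PsiRegular Ψ) :
    (∀ t b : Bool → 𝒮 → Fin k → ℝ,
      c.sigmaSqLin Ψ (c.thetaL Ψ) (c.betaL Ψ) ≤ c.sigmaSqLin Ψ t b) ∧
    c.sigmaSqLin Ψ (c.thetaL Ψ) (c.betaL Ψ) ≤ c.sigmaSqLin Ψ 0 0 := by
  haveI := hc.prob
  have hden : 0 < (c.P c.compliers).toReal ^ 2 :=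
    pow_pos (ENNReal.toReal_pos hc.compliersPos.ne' (measure_ne_top _ _)) 2
  have main : ∀ t b : Bool → 𝒮 → Fin k → ℝ,
      c.sigmaSqLin Ψ (c.thetaL Ψ) (c.betaL Ψ) ≤ c.sigmaSqLin Ψ t b := by
    intro t b
    have h1 := c.sumRepr Ψ hc hΨ (c.thetaL Ψ) (c.betaL Ψ)
    have h2 := c.sumRepr Ψ hc hΨ t b
    have hle : (∑ s : 𝒮, ∫ ω in c.stratum s, (c.q1 Ψ s (c.thetaL Ψ) (c.betaL Ψ) ω
          + c.q0 Ψ s (c.thetaL Ψ) (c.betaL Ψ) ω) ∂c.P)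
        ≤ ∑ s : 𝒮, ∫ ω in c.stratum s, (c.q1 Ψ s t b ω + c.q0 Ψ s t b ω) ∂c.P :=
      Finset.sum_le_sum fun s _ => c.key Ψ hc hΨ s t b
    show (c.sigma1Sq (linWM Ψ (c.thetaL Ψ)) (linWM Ψ (c.betaL Ψ))
          + c.sigma0Sq (linWM Ψ (c.thetaL Ψ)) (linWM Ψ (c.betaL Ψ)) + c.sigma2Sq)
        / (c.P c.compliers).toReal ^ 2
      ≤ (c.sigma1Sq (linWM Ψ t) (linWM Ψ b) + c.sigma0Sq (linWM Ψ t) (linWM Ψ b) + c.sigma2Sq)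
        / (c.P c.compliers).toReal ^ 2
    exact (div_le_div_iff_of_pos_right hden).mpr (by linarith)
  exact ⟨main, main 0 0⟩
end
end
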